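/- arXiv:2205.14068 — 7 statements merged into one kernel-verified Lean document; each statement's English description precedes it below -/
import Mathlib

section
/- Let q be a prime power, F_q the finite field with q elements, and let n, k, ℓ be positive integers. Let G be a k×n matrix over F_q, M an ℓ×k matrix over F_q, E an ℓ×n matrix over F_q, and set R = M·G + E. Let G' be the (k+ℓ)×n block matrix obtained by stacking G on top of R, and let J ⊆ {1,…,n}. If there exists a nonzero a ∈ F_q^ℓ such that the vector a·E vanishes on all coordinates in J, then there exists a nonzero x ∈ F_q^{k+ℓ} such that x·G' vanishes on all coordinates in J and x·G' = a·E; in particular the support of x·G' is contained in the set of indices of nonzero columns of E. -/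
open Matrix

/-- Correctness lemma of the Interleaved Prange algorithm: a linear dependency
`a ≠ 0` among the rows of `E` which vanishes on the positions in `J` lifts to a
nonzero vector `x` with `x ᵥ* G'` vanishing on `J` (where `G' = [G; R]` and
`R = M * G + E`) such that `x ᵥ* G' = a ᵥ* E`; in particular the support of
`x ᵥ* G'` is contained in the set of indices of nonzero columns of `E`. -/
theorem interleavedPrange_correctness
    {F : Type*} [Field F] [Fintype F]
    (n k ℓ : ℕ) (hn : 0 < n) (hk : 0 < k) (hℓ : 0 < ℓ)
    (G : Matrix (Fin k) (Fin n) F) (M : Matrix (Fin ℓ) (Fin k) F)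
    (E : Matrix (Fin ℓ) (Fin n) F) (R : Matrix (Fin ℓ) (Fin n) F)
    (hR : R = M * G + E)
    (J : Finset (Fin n)) (a : Fin ℓ → F) (ha : a ≠ 0)
    (haE : ∀ j ∈ J, (a ᵥ* E) j = 0) :
    ∃ x : Fin k ⊕ Fin ℓ → F, x ≠ 0 ∧
      (∀ j ∈ J, (x ᵥ* Matrix.fromRows G R) j = 0) ∧
      x ᵥ* Matrix.fromRows G R = a ᵥ* E ∧
      {j : Fin n | (x ᵥ* Matrix.fromRows G R) j ≠ 0}
        ⊆ {j : Fin n | ∃ i, E i j ≠ 0} := by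
  refine ⟨Sum.elim (-(a ᵥ* M)) a, ?_, ?_, ?_, ?_⟩
  · intro h
    apply ha
    funext i
    have := congrFun h (Sum.inr i)
    simpa using this
  all_goals
    have key : (Sum.elim (-(a ᵥ* M)) a) ᵥ* Matrix.fromRows G R = a ᵥ* E := by
      rw [Matrix.sumElim_vecMul_fromRows, hR, Matrix.vecMul_add, Matrix.neg_vecMul,
        ← Matrix.vecMul_vecMul]
      abel
  · intro j hj
    rw [key]
    exact haE j hj
  · exact key
  · intro j hj
    simp only [Set.mem_setOf_eq, key] at hj ⊢
    by_contra hc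
    push_neg at hc
    apply hj
    simp [vecMul, dotProduct]
    simp [hc]
end

section
/- Let q be a prime power, F_q the finite field with q elements, and let n, k, ℓ be positive integers with k+ℓ ≤ n. Let G be a k×n matrix over F_q, M an ℓ×k matrix over F_q, E an ℓ×n matrix over F_q, and set R = M·G + E. Let G' be the (k+ℓ)×n block matrix obtained by stacking G on top of R, and let J ⊆ {1,…,n} with |J| = k+ℓ. If the rows of the ℓ×(k+ℓ) matrix E_J (the columns of E indexed by J) are F_q-linearly dependent, then the (k+ℓ)×(k+ℓ) matrix G'_J (the columns of G' indexed by J) has rank strictly less than k+ℓ. -/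
open Matrix

/-- Rank-deficiency test of the Interleaved Prange algorithm: if the rows of the
submatrix `E_J` (columns of `E` indexed by the `(k+ℓ)`-set `J`) are linearly
dependent, then the `(k+ℓ) × (k+ℓ)` submatrix `G'_J` of `G' = [G; R]` has rank
strictly less than `k + ℓ`. -/
theorem interleavedPrange_rank_deficient
    {F : Type*} [Field F] [Fintype F] [DecidableEq F]
    (n k ℓ : ℕ) (hn : 0 < n) (hk : 0 < k) (hℓ : 0 < ℓ) (hkl : k + ℓ ≤ n)
    (G : Matrix (Fin k) (Fin n) F) (M : Matrix (Fin ℓ) (Fin k) F)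
    (E : Matrix (Fin ℓ) (Fin n) F) (R : Matrix (Fin ℓ) (Fin n) F)
    (hR : R = M * G + E)
    (J : Finset (Fin n)) (hJ : J.card = k + ℓ)
    (hdep : ¬ LinearIndependent F
      (fun i : Fin ℓ => fun j : {x : Fin n // x ∈ J} => E i (j : Fin n))) :
    ((Matrix.fromRows G R).submatrix id
        (fun j : {x : Fin n // x ∈ J} => (j : Fin n))).rank < k + ℓ := by
  classical
  set f : {x : Fin n // x ∈ J} → Fin n := fun j => (j : Fin n) with hf
  set A : Matrix (Fin k ⊕ Fin ℓ) {x : Fin n // x ∈ J} F :=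
    (Matrix.fromRows G R).submatrix id f with hA
  set G' : Fin k → {x : Fin n // x ∈ J} → F := fun i j => G i (f j) with hG'
  set E' : Fin ℓ → {x : Fin n // x ∈ J} → F := fun i j => E i (f j) with hE'
  -- span of rows of A is contained in span(rows G') ⊔ span(rows E')
  have hsub : Submodule.span F (Set.range A) ≤
      Submodule.span F (Set.range G') ⊔ Submodule.span F (Set.range E') := by
    rw [Submodule.span_le]
    rintro v ⟨i, rfl⟩
    cases i with
    | inl i =>
        exact Submodule.mem_sup_left (Submodule.subset_span ⟨i, rfl⟩)
    | inr i =>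
        have hrow : A (Sum.inr i) = (∑ t : Fin k, M i t • G' t) + E' i := by
          funext j
          simp [hA, hG', hE', hR, Matrix.mul_apply, Matrix.add_apply,
            Finset.sum_apply, Pi.add_apply, Pi.smul_apply, smul_eq_mul]
        rw [hrow]
        refine Submodule.add_mem _ (Submodule.mem_sup_left ?_)
          (Submodule.mem_sup_right (Submodule.subset_span ⟨i, rfl⟩))
        exact Submodule.sum_mem _ fun t _ =>
          Submodule.smul_mem _ _ (Submodule.subset_span ⟨t, rfl⟩)
  have hrank : A.rank = Module.finrank F (Submodule.span F (Set.range A)) :=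
    rank_eq_finrank_span_row A
  have hG'le : Module.finrank F (Submodule.span F (Set.range G')) ≤ k := by
    simpa [Set.finrank] using finrank_range_le_card (R := F) G'
  have hE'lt : Module.finrank F (Submodule.span F (Set.range E')) < ℓ := by
    have hle : Module.finrank F (Submodule.span F (Set.range E')) ≤ ℓ := by
      simpa [Set.finrank] using finrank_range_le_card (R := F) E'
    have hne : (ℓ : ℕ) ≠ Module.finrank F (Submodule.span F (Set.range E')) := by
      intro h
      exact hdep (linearIndependent_iff_card_eq_finrank_span.mpr (by simpa [Set.finrank] using h))
    exact lt_of_le_of_ne hle (Ne.symm hne)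
  have hsup : Module.finrank F
      ↥(Submodule.span F (Set.range G') ⊔ Submodule.span F (Set.range E')) ≤
      Module.finrank F (Submodule.span F (Set.range G')) +
      Module.finrank F (Submodule.span F (Set.range E')) := by
    rw [← Submodule.finrank_sup_add_finrank_inf_eq]
    exact Nat.le_add_right _ _
  calc A.rank = Module.finrank F (Submodule.span F (Set.range A)) := hrank
    _ ≤ Module.finrank F
        ↥(Submodule.span F (Set.range G') ⊔ Submodule.span F (Set.range E')) :=
      Submodule.finrank_mono hsub
    _ ≤ _ + _ := hsup
    _ < k + ℓ := by omega
end

section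
/- Let q be a prime power, F_q the finite field with q elements, and let n, t, ℓ, m be positive integers with t ≤ n and m ≤ n. Fix a set T ⊆ {1,…,n} with |T| = t. For a subset J ⊆ {1,…,n}, say that an ℓ×t matrix F over F_q (with columns indexed by T) is J-dependent if the rows of the submatrix of F consisting of the columns indexed by J ∩ T are F_q-linearly dependent. Then the sum, over all subsets J of {1,…,n} with |J| = m, of the number of J-dependent matrices F ∈ F_q^{ℓ×t}, equals C(n,m)·q^{ℓt}·∑_{i=0}^{min(t,m)} [C(t,i)·C(n−t, m−i)/C(n,m)]·(1 − ∏_{j=0}^{ℓ−1}(1 − q^{j−i})), where C(·,·) denotes the binomial coefficient. -/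
open Matrix

private lemma card_li_general {K V : Type*} [Field K] [Fintype K] [AddCommGroup V] [Module K V]
    [Finite V] (ℓ : ℕ) :
    Nat.card {s : Fin ℓ → V // LinearIndependent K s} =
      ∏ j ∈ Finset.range ℓ,
        (Fintype.card K ^ Module.finrank K V - Fintype.card K ^ j) := by
  have : Module.Finite K V := Module.Finite.of_finite
  by_cases h : ℓ ≤ Module.finrank K V
  · rw [card_linearIndependent h, ← Fin.prod_univ_eq_prod_range]
  · have hempty : IsEmpty {s : Fin ℓ → V // LinearIndependent K s} := by
      constructor
      rintro ⟨s, hs⟩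
      exact h (by simpa using hs.fintype_card_le_finrank)
    rw [Nat.card_of_isEmpty]
    symm
    apply Finset.prod_eq_zero (Finset.mem_range.2 (lt_of_not_ge h))
    simp

private def depEquiv {K : Type*} [Field K] (ℓ : ℕ) {ι : Type*} (p : ι → Prop) [DecidablePred p] :
    {F : Matrix (Fin ℓ) ι K //
        LinearIndependent K (fun r : Fin ℓ => fun j : {y // p y} => F r j.1)} ≃
      ({g : Fin ℓ → ({y // p y} → K) // LinearIndependent K g} × (Fin ℓ → {y // ¬ p y} → K)) where
  toFun F := (⟨fun r j => F.1 r j.1, F.2⟩, fun r j => F.1 r j.1)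
  invFun x := ⟨fun r y => if h : p y then x.1.1 r ⟨y, h⟩ else x.2 r ⟨y, h⟩, by
    have he : (fun r : Fin ℓ => fun j : {y // p y} =>
        (if h : p j.1 then x.1.1 r ⟨j.1, h⟩ else x.2 r ⟨j.1, h⟩)) = x.1.1 := by
      funext r j
      rw [dif_pos j.2]
    rw [he]
    exact x.1.2⟩
  left_inv F := by
    apply Subtype.ext
    funext r y
    by_cases h : p y <;> simp [h]
  right_inv x := by
    refine Prod.ext ?_ ?_
    · apply Subtype.ext
      funext r j
      simp [j.2]
    · funext r j
      simp [j.2]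

private lemma count_dep {K : Type*} [Field K] [Fintype K] (ℓ : ℕ) {ι : Type*} [Fintype ι]
    (p : ι → Prop) [DecidablePred p] :
    Nat.card {F : Matrix (Fin ℓ) ι K //
        ¬ LinearIndependent K (fun r : Fin ℓ => fun j : {y // p y} => F r j.1)} =
      Fintype.card K ^ (ℓ * Fintype.card ι) -
        (∏ j ∈ Finset.range ℓ,
            (Fintype.card K ^ Fintype.card {y // p y} - Fintype.card K ^ j)) *
          Fintype.card K ^ (ℓ * (Fintype.card ι - Fintype.card {y // p y})) := by
  classical
  rw [Nat.card_eq_fintype_card, Fintype.card_subtype_compl]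
  congr 1
  · rw [← Nat.card_eq_fintype_card, Nat.card_congr (Matrix.of (m := Fin ℓ) (n := ι) (α := K)).symm,
      Nat.card_eq_fintype_card, Fintype.card_fun, Fintype.card_fun, Fintype.card_fin,
      ← pow_mul, Nat.mul_comm]
  · rw [← Nat.card_eq_fintype_card, Nat.card_congr (depEquiv ℓ p), Nat.card_prod,
      card_li_general]
    rw [Nat.card_eq_fintype_card (α := Fin ℓ → {y // ¬ p y} → K)]
    simp only [Fintype.card_fun, Fintype.card_fin, Fintype.card_subtype_compl,
      Module.finrank_fintype_fun_eq_card]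
    rw [← pow_mul, Nat.mul_comm _ ℓ, Nat.mul_comm]

private lemma count_dep_real {K : Type*} [Field K] [Fintype K] (ℓ t i : ℕ) (hit : i ≤ t) :
    ((Fintype.card K ^ (ℓ * t) -
        (∏ j ∈ Finset.range ℓ, (Fintype.card K ^ i - Fintype.card K ^ j)) *
          Fintype.card K ^ (ℓ * (t - i)) : ℕ) : ℝ) =
      (Fintype.card K : ℝ) ^ (ℓ * t) *
        (1 - ∏ j ∈ Finset.range ℓ, (1 - (Fintype.card K : ℝ) ^ ((j : ℤ) - (i : ℤ)))) := by
  set q := Fintype.card K with hqdef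
  have hq : 1 ≤ q := Fintype.card_pos
  have hq0 : (0:ℝ) < (q:ℝ) := by exact_mod_cast hq
  by_cases h : ℓ ≤ i
  · have hle : ∀ j ∈ Finset.range ℓ, q ^ j ≤ q ^ i := fun j hj =>
      Nat.pow_le_pow_right hq (le_trans (Nat.le_of_lt_succ (Nat.lt_succ_of_lt
        (Finset.mem_range.1 hj))) h)
    have hexp : i * ℓ + ℓ * (t - i) = ℓ * t := by
      have := Nat.add_sub_cancel' hit
      calc i * ℓ + ℓ * (t - i) = ℓ * (i + (t - i)) := by ring
        _ = ℓ * t := by rw [Nat.add_sub_cancel' hit]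
    have hprod_le : (∏ j ∈ Finset.range ℓ, (q ^ i - q ^ j)) * q ^ (ℓ * (t - i)) ≤ q ^ (ℓ * t) := by
      calc (∏ j ∈ Finset.range ℓ, (q ^ i - q ^ j)) * q ^ (ℓ * (t - i))
          ≤ (∏ _j ∈ Finset.range ℓ, q ^ i) * q ^ (ℓ * (t - i)) := by
            gcongr with j hj
            exact Nat.sub_le _ _
        _ = q ^ (ℓ * t) := by
            rw [Finset.prod_const, Finset.card_range, ← pow_mul, ← pow_add, hexp]
    rw [Nat.cast_sub hprod_le, Nat.cast_mul, Nat.cast_prod, Nat.cast_pow, Nat.cast_pow]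
    have hfac : ∀ j ∈ Finset.range ℓ, ((q ^ i - q ^ j : ℕ) : ℝ) =
        (q:ℝ) ^ i * (1 - (q:ℝ) ^ ((j : ℤ) - (i : ℤ))) := by
      intro j hj
      rw [Nat.cast_sub (hle j hj), Nat.cast_pow, Nat.cast_pow, mul_one_sub]
      congr 1
      rw [← zpow_natCast (q:ℝ) i, ← zpow_natCast (q:ℝ) j, ← zpow_add₀ (ne_of_gt hq0)]
      congr 1
      ring
    rw [Finset.prod_congr rfl hfac, Finset.prod_mul_distrib, Finset.prod_const,
      Finset.card_range]
    have hsplit : ((q:ℝ) ^ i) ^ ℓ * (q:ℝ) ^ (ℓ * (t - i)) = (q:ℝ) ^ (ℓ * t) := by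
      rw [← pow_mul, ← pow_add, hexp]
    rw [mul_one_sub]
    have : ((q:ℝ) ^ i) ^ ℓ * (∏ j ∈ Finset.range ℓ, (1 - (q:ℝ) ^ ((j : ℤ) - (i : ℤ)))) *
        (q:ℝ) ^ (ℓ * (t - i)) = (q:ℝ) ^ (ℓ * t) *
          ∏ j ∈ Finset.range ℓ, (1 - (q:ℝ) ^ ((j : ℤ) - (i : ℤ))) := by
      rw [← hsplit]; ring
    linarith [this]
  · push_neg at h
    have h1 : (∏ j ∈ Finset.range ℓ, (q ^ i - q ^ j)) = 0 :=
      Finset.prod_eq_zero (Finset.mem_range.2 h) (by simp)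
    have h2 : ∏ j ∈ Finset.range ℓ, (1 - (q:ℝ) ^ ((j : ℤ) - (i : ℤ))) = 0 :=
      Finset.prod_eq_zero (Finset.mem_range.2 h) (by simp)
    rw [h1, h2]
    simp

private lemma fiber_card (n t m i : ℕ) (T : Finset (Fin n)) (hT : T.card = t) (him : i ≤ m) :
    ((((Finset.univ : Finset (Finset (Fin n))).filter (fun J => J.card = m)).filter
        (fun J => (J ∩ T).card = i)).card : ℕ) = t.choose i * (n - t).choose (m - i) := by
  classical
  have hTc : Tᶜ.card = n - t := by rw [Finset.card_compl, hT, Fintype.card_fin]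
  have : t.choose i * (n - t).choose (m - i) =
      ((T.powersetCard i) ×ˢ (Tᶜ.powersetCard (m - i))).card := by
    rw [Finset.card_product, Finset.card_powersetCard, Finset.card_powersetCard, hT, hTc]
  rw [this]
  apply Finset.card_nbij' (fun J => (J ∩ T, J \ T)) (fun p => p.1 ∪ p.2)
  · intro J hJ
    simp only [Finset.mem_coe, Finset.mem_filter, Finset.mem_univ, true_and] at hJ
    obtain ⟨hJm, hJi⟩ := hJ
    have hsd : (J \ T).card = m - i := by
      have := Finset.card_sdiff_add_card_inter J T
      omega
    simp only [Finset.mem_coe, Finset.mem_product, Finset.mem_powersetCard]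
    refine ⟨⟨Finset.inter_subset_right, hJi⟩, ?_, hsd⟩
    intro x hx
    simp only [Finset.mem_sdiff] at hx
    simpa [Finset.mem_compl] using hx.2
  · intro p hp
    simp only [Finset.mem_coe, Finset.mem_product, Finset.mem_powersetCard] at hp
    obtain ⟨⟨hA, hAc⟩, hB, hBc⟩ := hp
    have hdisj : Disjoint p.1 p.2 := by
      rw [Finset.disjoint_left]
      intro x hx1 hx2
      exact (Finset.mem_compl.1 (hB hx2)) (hA hx1)
    have hBT : ∀ x ∈ p.2, x ∉ T := fun x hx => Finset.mem_compl.1 (hB hx)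
    have hint : (p.1 ∪ p.2) ∩ T = p.1 := by
      ext x
      simp only [Finset.mem_inter, Finset.mem_union]
      constructor
      · rintro ⟨h1 | h1, h2⟩
        · exact h1
        · exact absurd h2 (hBT x h1)
      · intro h
        exact ⟨Or.inl h, hA h⟩
    simp only [Finset.mem_coe, Finset.mem_filter, Finset.mem_univ, true_and]
    rw [Finset.card_union_of_disjoint hdisj, hAc, hBc, hint, hAc]
    omega
  · intro J hJ
    ext x
    simp only [Finset.mem_union, Finset.mem_inter, Finset.mem_sdiff]
    tauto
  · intro p hp
    simp only [Finset.mem_coe, Finset.mem_product, Finset.mem_powersetCard] at hp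
    obtain ⟨⟨hA, hAc⟩, hB, hBc⟩ := hp
    have hBT : ∀ x ∈ p.2, x ∉ T := fun x hx => Finset.mem_compl.1 (hB hx)
    have hAT : ∀ x ∈ p.1, x ∈ T := fun x hx => hA hx
    refine Prod.ext ?_ ?_
    · ext x
      simp only [Finset.mem_inter, Finset.mem_union]
      constructor
      · rintro ⟨h1 | h1, h2⟩
        · exact h1
        · exact absurd h2 (hBT x h1)
      · intro h
        exact ⟨Or.inl h, hAT x h⟩
    · ext x
      simp only [Finset.mem_sdiff, Finset.mem_union]
      constructor
      · rintro ⟨h1 | h1, h2⟩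
        · exact absurd (hAT x h1) h2
        · exact h1
      · intro h
        exact ⟨Or.inr h, hBT x h⟩

/-- Success probability of one iteration of the Interleaved Prange algorithm:
the sum, over all `m`-subsets `J` of `{1,…,n}`, of the number of matrices
`F ∈ F_q^{ℓ × t}` (columns indexed by the fixed `t`-set `T`) whose columns
indexed by `J ∩ T` form a matrix with linearly dependent rows, equals
`C(n,m) q^{ℓt} ∑_{i=0}^{min(t,m)} [C(t,i)C(n-t,m-i)/C(n,m)] (1 - ∏_{j<ℓ}(1 - q^{j-i}))`. -/
theorem interleavedPrange_success_count
    {K : Type*} [Field K] [Fintype K]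
    (n t ℓ m : ℕ) (hn : 0 < n) (ht : 0 < t) (hℓ : 0 < ℓ) (hm : 0 < m)
    (htn : t ≤ n) (hmn : m ≤ n)
    (T : Finset (Fin n)) (hT : T.card = t) :
    (∑ J ∈ (Finset.univ : Finset (Finset (Fin n))).filter (fun J => J.card = m),
        (Nat.card {F : Matrix (Fin ℓ) {x : Fin n // x ∈ T} K //
            ¬ LinearIndependent K
              (fun r : Fin ℓ =>
                fun j : {y : {x : Fin n // x ∈ T} // (y : Fin n) ∈ J} =>
                  F r (j : {x : Fin n // x ∈ T}))} : ℝ))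
      = (Nat.choose n m : ℝ) * (Fintype.card K : ℝ) ^ (ℓ * t) *
          ∑ i ∈ Finset.range (min t m + 1),
            ((Nat.choose t i : ℝ) * (Nat.choose (n - t) (m - i) : ℝ)
                / (Nat.choose n m : ℝ))
              * (1 - ∏ j ∈ Finset.range ℓ,
                  (1 - (Fintype.card K : ℝ) ^ ((j : ℤ) - (i : ℤ)))) := by
  classical
  have hcardι : Fintype.card {x : Fin n // x ∈ T} = t := by
    rw [Fintype.card_coe, hT]
  -- Per-J count
  have key : ∀ J : Finset (Fin n),
      (Nat.card {F : Matrix (Fin ℓ) {x : Fin n // x ∈ T} K //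
          ¬ LinearIndependent K
            (fun r : Fin ℓ =>
              fun j : {y : {x : Fin n // x ∈ T} // (y : Fin n) ∈ J} =>
                F r (j : {x : Fin n // x ∈ T}))} : ℝ) =
        (Fintype.card K : ℝ) ^ (ℓ * t) *
          (1 - ∏ j ∈ Finset.range ℓ,
            (1 - (Fintype.card K : ℝ) ^ ((j : ℤ) - (((J ∩ T).card : ℕ) : ℤ)))) := by
    intro J
    have hsub : Fintype.card {y : {x : Fin n // x ∈ T} // (y : Fin n) ∈ J} = (J ∩ T).card := by
      rw [Fintype.card_congr (Equiv.subtypeSubtypeEquivSubtypeInter (· ∈ T) (· ∈ J))]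
      rw [Fintype.card_subtype]
      congr 1
      ext x
      simp [Finset.mem_inter, and_comm]
    have hit : (J ∩ T).card ≤ t := by
      rw [← hT]
      exact Finset.card_le_card Finset.inter_subset_right
    have h1 := count_dep (K := K) ℓ (fun y : {x : Fin n // x ∈ T} => (y : Fin n) ∈ J)
    rw [hcardι, hsub] at h1
    rw [h1]
    exact count_dep_real ℓ t (J ∩ T).card hit
  -- group the sum by fibers of J ↦ (J ∩ T).card
  have hmaps : ∀ J ∈ (Finset.univ : Finset (Finset (Fin n))).filter (fun J => J.card = m),
      (J ∩ T).card ∈ Finset.range (min t m + 1) := by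
    intro J hJ
    simp only [Finset.mem_filter, Finset.mem_univ, true_and] at hJ
    rw [Finset.mem_range, Nat.lt_succ_iff, le_min_iff]
    constructor
    · rw [← hT]; exact Finset.card_le_card Finset.inter_subset_right
    · rw [← hJ]; exact Finset.card_le_card Finset.inter_subset_left
  rw [← Finset.sum_fiberwise_of_maps_to hmaps]
  have hchoose : (0:ℝ) < (n.choose m : ℝ) := by
    exact_mod_cast Nat.choose_pos hmn
  rw [Finset.mul_sum]
  apply Finset.sum_congr rfl
  intro i hi
  rw [Finset.mem_range, Nat.lt_succ_iff, le_min_iff] at hi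
  have hinner : ∀ J ∈ (((Finset.univ : Finset (Finset (Fin n))).filter
      (fun J => J.card = m)).filter (fun J => (J ∩ T).card = i)),
      (Nat.card {F : Matrix (Fin ℓ) {x : Fin n // x ∈ T} K //
          ¬ LinearIndependent K
            (fun r : Fin ℓ =>
              fun j : {y : {x : Fin n // x ∈ T} // (y : Fin n) ∈ J} =>
                F r (j : {x : Fin n // x ∈ T}))} : ℝ) =
        (Fintype.card K : ℝ) ^ (ℓ * t) *
          (1 - ∏ j ∈ Finset.range ℓ,
            (1 - (Fintype.card K : ℝ) ^ ((j : ℤ) - (i : ℤ)))) := by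
    intro J hJ
    simp only [Finset.mem_filter] at hJ
    rw [key J, hJ.2]
  rw [Finset.sum_congr rfl hinner, Finset.sum_const, nsmul_eq_mul,
    fiber_card n t m i T hT hi.2]
  push_cast
  field_simp
end

section
/- Let q ≥ 2 be an integer and let 0 ≤ b ≤ a be integers. Then q^{(a−b)b} ≤ [a choose b]_q ≤ 4·q^{(a−b)b}, where [a choose b]_q denotes the Gaussian binomial coefficient [a choose b]_q = ∏_{j=0}^{b−1} (q^{a−j} − 1)/(q^{b−j} − 1). -/
open Finset


/-- The Gaussian binomial coefficient `[a choose b]_q = ∏_{j=0}^{b-1} (q^{a-j} - 1)/(q^{b-j} - 1)`. -/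
noncomputable def gaussBinomial (q a b : ℕ) : ℝ :=
  ∏ j ∈ Finset.range b, ((q : ℝ) ^ (a - j) - 1) / ((q : ℝ) ^ (b - j) - 1)

lemma two_prod_lb : ∀ n : ℕ, 1/4 + 1/2^(n+1) ≤ ∏ i ∈ range n, (1 - 1/(2:ℝ)^(i+1))
  | 0 => by norm_num
  | 1 => by rw [prod_range_one]; norm_num
  | (n+2) => by
    have ih := two_prod_lb (n+1)
    rw [prod_range_succ]
    set x : ℝ := 1/2^(n+2) with hx
    have hx0 : 0 ≤ x := by positivity
    have hxle : x ≤ 1/4 := by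
      rw [hx, div_le_div_iff₀ (by positivity) (by norm_num)]
      have : (2:ℝ)^2 ≤ 2^(n+2) := pow_le_pow_right₀ one_le_two (by omega)
      norm_num at this ⊢; linarith
    have e : (1:ℝ)/2^(n+2+1) = x/2 := by rw [hx, pow_succ]; ring
    rw [e]
    have h1 : (1/4 + x) * (1 - x) ≤ (∏ i ∈ range (n+1), (1 - 1/(2:ℝ)^(i+1))) * (1 - x) := by
      apply mul_le_mul_of_nonneg_right _ (by linarith)
      exact ih
    nlinarith

lemma q_prod_lb (Q : ℝ) (hQ : 2 ≤ Q) (n : ℕ) :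
    (1:ℝ)/4 ≤ ∏ i ∈ range n, (1 - 1/Q^(i+1)) := by
  have h2 : ∏ i ∈ range n, (1 - 1/(2:ℝ)^(i+1)) ≤ ∏ i ∈ range n, (1 - 1/Q^(i+1)) := by
    apply prod_le_prod
    · intro i _
      have : (1:ℝ)/2^(i+1) ≤ 1 := by
        apply div_le_one_of_le₀ _ (by positivity)
        exact one_le_pow₀ (by norm_num)
      linarith
    · intro i _
      have : (1:ℝ)/Q^(i+1) ≤ 1/2^(i+1) := by
        apply div_le_div_of_nonneg_left (by norm_num) (by positivity)
        exact pow_le_pow_left₀ (by norm_num) hQ _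
      linarith
  have h3 := two_prod_lb n
  have h4 : (0:ℝ) < 1/2^(n+1) := by positivity
  linarith

/-- For `q ≥ 2` and `0 ≤ b ≤ a`:
`q^{(a-b)b} ≤ [a choose b]_q ≤ 4 q^{(a-b)b}`. -/
theorem gaussBinomial_bounds (q a b : ℕ) (hq : 2 ≤ q) (hba : b ≤ a) :
    (q : ℝ) ^ ((a - b) * b) ≤ gaussBinomial q a b ∧
      gaussBinomial q a b ≤ 4 * (q : ℝ) ^ ((a - b) * b) := by
  set Q : ℝ := (q : ℝ) with hQdef
  have hQ : 2 ≤ Q := by rw [hQdef]; exact_mod_cast hq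
  have hQ1 : 1 < Q := by linarith
  have hQ0 : 0 < Q := by linarith
  have hden : ∀ j ∈ range b, 0 < Q ^ (b - j) - 1 := by
    intro j hj
    rw [mem_range] at hj
    have : 1 < Q ^ (b - j) := one_lt_pow₀ hQ1 (by omega)
    linarith
  have hfac : ∀ j ∈ range b, 0 ≤ (Q ^ (a - j) - 1) / (Q ^ (b - j) - 1) := by
    intro j hj
    have h1 : 1 ≤ Q ^ (a - j) := one_le_pow₀ (by linarith)
    exact div_nonneg (by linarith) (le_of_lt (hden j hj))
  have hpc : ∏ _j ∈ range b, Q^(a-b) = Q^((a-b)*b) := by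
    rw [prod_const, card_range, ← pow_mul]
  constructor
  · -- lower bound
    rw [gaussBinomial, ← hpc]
    apply prod_le_prod
    · intro j _; positivity
    · intro j hj
      rw [mem_range] at hj
      rw [le_div_iff₀ (hden j (mem_range.mpr hj))]
      have heq : a - b + (b - j) = a - j := by omega
      have epow : Q ^ (a - b) * Q ^ (b - j) = Q ^ (a - j) := by
        rw [← pow_add, heq]
      have h1 : 1 ≤ Q ^ (a - b) := one_le_pow₀ (by linarith)
      nlinarith
  · -- upper bound
    have hP : (1:ℝ)/4 ≤ ∏ i ∈ range b, (1 - 1/Q^(i+1)) := q_prod_lb Q hQ b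
    have hP' : ∏ i ∈ range b, (1 - 1/Q^(i+1)) = ∏ j ∈ range b, (1 - 1/Q^(b-j)) := by
      rw [← prod_range_reflect]
      apply prod_congr rfl
      intro j hj
      rw [mem_range] at hj
      have : b - 1 - j + 1 = b - j := by omega
      rw [this]
    have hkey : gaussBinomial q a b * ∏ j ∈ range b, (1 - 1/Q^(b-j)) ≤ Q ^ ((a-b)*b) := by
      rw [gaussBinomial, ← prod_mul_distrib, ← hpc]
      apply prod_le_prod
      · intro j hj
        apply mul_nonneg (hfac j hj)
        rw [mem_range] at hj
        have : (1:ℝ)/Q^(b-j) ≤ 1 := by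
          apply div_le_one_of_le₀ _ (by positivity)
          exact one_le_pow₀ (by linarith)
        linarith
      · intro j hj
        rw [mem_range] at hj
        have hd := hden j (mem_range.mpr hj)
        have hpow : (0:ℝ) < Q ^ (b - j) := by positivity
        have e : (1 - 1/Q^(b-j)) = (Q^(b-j) - 1)/Q^(b-j) := by
          field_simp
        rw [e, div_mul_div_comm, div_le_iff₀ (by positivity)]
        have heq : a - b + (b - j) = a - j := by omega
        have epow : Q ^ (a - b) * Q ^ (b - j) = Q ^ (a - j) := by
          rw [← pow_add, heq]
        have h1 : 1 ≤ Q ^ (a - j) := one_le_pow₀ (by linarith)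
        nlinarith
    have hg0 : 0 ≤ gaussBinomial q a b := prod_nonneg hfac
    have hPpos : (0:ℝ) < ∏ j ∈ range b, (1 - 1/Q^(b-j)) := by
      rw [← hP']; linarith
    calc gaussBinomial q a b
        ≤ Q ^ ((a-b)*b) / ∏ j ∈ range b, (1 - 1/Q^(b-j)) := by
          rw [le_div_iff₀ hPpos]; exact hkey
      _ ≤ 4 * Q ^ ((a-b)*b) := by
          rw [div_le_iff₀ hPpos, ← hP']
          nlinarith [pow_nonneg (le_of_lt hQ0) ((a-b)*b)]
end

section
/- Let q be a prime power, F_q the finite field with q elements, and let n, m, k, d be nonnegative integers with d ≤ m ≤ n, d ≤ k, and k − d ≤ n − m. Let V be an n-dimensional vector space over F_q and let U ⊆ V be a fixed m-dimensional subspace. Then the number of k-dimensional subspaces W of V with dim(W ∩ U) = d equals [n−m choose k−d]_q · [m choose d]_q · q^{(m−d)(k−d)}, where [a choose b]_q denotes the Gaussian binomial coefficient [a choose b]_q = ∏_{j=0}^{b−1} (q^{a−j} − 1)/(q^{b−j} − 1). -/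
open Module Submodule Set

section Aux

variable {K Y : Type*} [Field K] [Fintype K] [AddCommGroup Y] [Module K Y]
  [FiniteDimensional K Y]

lemma natCard_eq_pow_finrank [Finite Y] :
    Nat.card Y = Fintype.card K ^ finrank K Y := by
  have := Fintype.ofFinite Y
  rw [Nat.card_eq_fintype_card, card_eq_pow_finrank (K := K)]

/-- Counting tuples in a submodule `S` that are linearly independent. -/
lemma card_li_in_submodule (S : Submodule K Y) (r : ℕ) (hr : r ≤ finrank K S) :
    Nat.card {a : Fin r → Y // (∀ i, a i ∈ S) ∧ LinearIndependent K a} =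
      ∏ i : Fin r, (Fintype.card K ^ finrank K S - Fintype.card K ^ i.val) := by
  have : Finite Y := Module.finite_of_finite K
  have e : {a : Fin r → Y // (∀ i, a i ∈ S) ∧ LinearIndependent K a} ≃
      {a : Fin r → S // LinearIndependent K a} :=
  { toFun := fun a => ⟨fun i => ⟨a.1 i, a.2.1 i⟩, by
      have := a.2.2
      rw [← LinearMap.linearIndependent_iff (v := fun i => (⟨a.1 i, a.2.1 i⟩ : S))
        S.subtype S.ker_subtype]
      exact this⟩
    invFun := fun a => ⟨fun i => (a.1 i : Y), fun i => (a.1 i).2,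
      a.2.map' S.subtype S.ker_subtype⟩
    left_inv := fun a => Subtype.ext (funext fun i => rfl)
    right_inv := fun a => Subtype.ext (funext fun i => Subtype.ext rfl) }
  rw [Nat.card_congr e, card_linearIndependent hr]

/-- Counting tuples that are linearly independent modulo `S`. -/
lemma card_li_mod_submodule (S : Submodule K Y) (r : ℕ) (hr : r ≤ finrank K (Y ⧸ S)) :
    Nat.card {b : Fin r → Y // LinearIndependent K (S.mkQ ∘ b)} =
      (∏ j : Fin r, (Fintype.card K ^ finrank K (Y ⧸ S) - Fintype.card K ^ j.val)) *
        Fintype.card K ^ (finrank K S * r) := by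
  have : Finite Y := Module.finite_of_finite K
  obtain ⟨σ, hσ⟩ := S.mkQ.exists_rightInverse_of_surjective
    (by rw [Submodule.range_mkQ])
  have hσ' : ∀ x, S.mkQ (σ x) = x := fun x => congrArg (fun f => f x) (congrArg DFunLike.coe hσ)
  have hσ'' : ∀ x, (Submodule.Quotient.mk (σ x) : Y ⧸ S) = x := hσ'
  have : Finite (Y ⧸ S) := Module.finite_of_finite K
  have e : {b : Fin r → Y // LinearIndependent K (S.mkQ ∘ b)} ≃
      {c : Fin r → Y ⧸ S // LinearIndependent K c} × (Fin r → S) :=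
  { toFun := fun b => (⟨S.mkQ ∘ b.1, b.2⟩,
      fun j => ⟨b.1 j - σ (S.mkQ (b.1 j)), by
        have h0 : S.mkQ (b.1 j - σ (S.mkQ (b.1 j))) = 0 := by rw [map_sub, hσ', sub_self]
        rwa [Submodule.mkQ_apply, Submodule.Quotient.mk_eq_zero] at h0⟩)
    invFun := fun p => ⟨fun j => σ (p.1.1 j) + (p.2 j : Y), by
      have : S.mkQ ∘ (fun j => σ (p.1.1 j) + (p.2 j : Y)) = p.1.1 := by
        funext j
        simp [hσ'', (Submodule.Quotient.mk_eq_zero S).2 (p.2 j).2]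
      rw [this]; exact p.1.2⟩
    left_inv := fun b => Subtype.ext (funext fun j => by simp)
    right_inv := fun p => by
      refine Prod.ext (Subtype.ext (funext fun j => ?_)) (funext fun j => Subtype.ext ?_)
      · simp [hσ'', (Submodule.Quotient.mk_eq_zero S).2 (p.2 j).2]
      · simp [hσ'', (Submodule.Quotient.mk_eq_zero S).2 (p.2 j).2]
      }
  rw [Nat.card_congr e, Nat.card_prod, card_linearIndependent hr, Nat.card_fun,
    natCard_eq_pow_finrank (K := K) (Y := S), Nat.card_eq_fintype_card, Fintype.card_fin,
    ← pow_mul]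

/-- Counting pairs of tuples: `r₁` linearly independent vectors in `S` together with
`r₂` vectors linearly independent modulo `S`. -/
lemma card_pairs (S : Submodule K Y) (r₁ r₂ : ℕ)
    (h1 : r₁ ≤ finrank K S) (h2 : r₂ ≤ finrank K (Y ⧸ S)) :
    Nat.card {p : (Fin r₁ → Y) × (Fin r₂ → Y) //
        ((∀ i, p.1 i ∈ S) ∧ LinearIndependent K p.1) ∧ LinearIndependent K (S.mkQ ∘ p.2)} =
      (∏ i : Fin r₁, (Fintype.card K ^ finrank K S - Fintype.card K ^ i.val)) *
        ((∏ j : Fin r₂, (Fintype.card K ^ finrank K (Y ⧸ S) - Fintype.card K ^ j.val)) *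
          Fintype.card K ^ (finrank K S * r₂)) := by
  rw [Nat.card_congr (Equiv.subtypeProdEquivProd
      (p := fun a : Fin r₁ → Y => (∀ i, a i ∈ S) ∧ LinearIndependent K a)
      (q := fun b : Fin r₂ → Y => LinearIndependent K (S.mkQ ∘ b))), Nat.card_prod,
    card_li_in_submodule S r₁ h1, card_li_mod_submodule S r₂ h2]

end Aux

section Span

variable {K V : Type*} [Field K] [AddCommGroup V] [Module K V] [FiniteDimensional K V]

lemma disjoint_of_li_mkQ (U : Submodule K V) {r : ℕ} (b : Fin r → V)
    (hb : LinearIndependent K (U.mkQ ∘ b)) :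
    Disjoint U (span K (Set.range b)) := by
  set T := span K (Set.range b) with hTdef
  have hbLI : LinearIndependent K b := hb.of_comp _
  have hT : finrank K T = r := by
    rw [finrank_span_eq_card hbLI, Fintype.card_fin]
  set f : T →ₗ[K] V ⧸ U := U.mkQ ∘ₗ T.subtype with hfdef
  have hrange : LinearMap.range f = Submodule.map U.mkQ T := by
    rw [hfdef, LinearMap.range_comp, Submodule.range_subtype]
  have hmap : Submodule.map U.mkQ T = span K (Set.range (U.mkQ ∘ b)) := by
    rw [hTdef, Submodule.map_span, ← Set.range_comp]
  have hr2 : finrank K (LinearMap.range f) = r := by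
    rw [hrange, hmap, finrank_span_eq_card hb, Fintype.card_fin]
  have hrn := f.finrank_range_add_finrank_ker
  have hker : LinearMap.ker f = ⊥ := by
    rw [← Submodule.finrank_eq_zero (R := K)]
    omega
  have hkerc : LinearMap.ker f = Submodule.comap T.subtype U := by
    rw [hfdef, LinearMap.ker_comp, Submodule.ker_mkQ]
  rw [disjoint_comm, disjoint_iff]
  have h3 : T ⊓ U = Submodule.map T.subtype (Submodule.comap T.subtype U) :=
    (Submodule.map_comap_subtype _ _).symm
  rw [h3, ← hkerc, hker, Submodule.map_bot]

lemma li_sum (U : Submodule K V) {d r : ℕ} (a : Fin d → V) (b : Fin r → V)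
    (ha : ∀ i, a i ∈ U) (hla : LinearIndependent K a)
    (hlb : LinearIndependent K (U.mkQ ∘ b)) :
    LinearIndependent K (Sum.elim a b) := by
  rw [linearIndependent_sum]
  refine ⟨hla, hlb.of_comp _, ?_⟩
  have h1 : span K (Set.range (Sum.elim a b ∘ Sum.inl)) ≤ U := by
    rw [Submodule.span_le]
    rintro x ⟨i, rfl⟩
    exact ha i
  exact Disjoint.mono_left h1 (by
    simpa using disjoint_of_li_mkQ U b hlb)

lemma finrank_comap_subtype (p q : Submodule K V) :
    finrank K (Submodule.comap p.subtype q) = finrank K ↥(p ⊓ q) := by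
  rw [← Submodule.map_comap_subtype]
  exact (Submodule.equivMapOfInjective p.subtype (Submodule.injective_subtype p)
    (Submodule.comap p.subtype q)).finrank_eq

lemma map_mkQ_span (U : Submodule K V) {d r : ℕ} (a : Fin d → V) (b : Fin r → V)
    (ha : ∀ i, a i ∈ U) :
    Submodule.map U.mkQ (span K (Set.range (Sum.elim a b))) =
      span K (Set.range (U.mkQ ∘ b)) := by
  rw [Submodule.map_span, ← Set.range_comp]
  have h : ⇑U.mkQ ∘ Sum.elim a b = Sum.elim (⇑U.mkQ ∘ a) (⇑U.mkQ ∘ b) := by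
    funext x; cases x <;> rfl
  rw [h, Set.Sum.elim_range, Submodule.span_union]
  have h0 : span K (Set.range (⇑U.mkQ ∘ a)) = ⊥ := by
    rw [Submodule.span_eq_bot]
    rintro x ⟨i, rfl⟩
    simpa [Submodule.Quotient.mk_eq_zero] using ha i
  rw [h0, bot_sup_eq]

lemma span_props (U : Submodule K V) {d r : ℕ} (a : Fin d → V) (b : Fin r → V)
    (ha : ∀ i, a i ∈ U) (hla : LinearIndependent K a)
    (hlb : LinearIndependent K (U.mkQ ∘ b)) :
    finrank K (span K (Set.range (Sum.elim a b))) = d + r ∧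
      finrank K ↥(span K (Set.range (Sum.elim a b)) ⊓ U) = d := by
  have hli := li_sum U a b ha hla hlb
  set W := span K (Set.range (Sum.elim a b)) with hWdef
  have h1 : finrank K W = d + r := by
    rw [hWdef, finrank_span_eq_card hli]
    simp
  refine ⟨h1, ?_⟩
  set f : W →ₗ[K] V ⧸ U := U.mkQ ∘ₗ W.subtype with hfdef
  have hrange : LinearMap.range f = Submodule.map U.mkQ W := by
    rw [hfdef, LinearMap.range_comp, Submodule.range_subtype]
  have hr2 : finrank K (LinearMap.range f) = r := by
    rw [hrange, hWdef, map_mkQ_span U a b ha, finrank_span_eq_card hlb, Fintype.card_fin]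
  have hrn := f.finrank_range_add_finrank_ker
  have hkerc : LinearMap.ker f = Submodule.comap W.subtype U := by
    rw [hfdef, LinearMap.ker_comp, Submodule.ker_mkQ]
  have h4 : finrank K (LinearMap.ker f) = finrank K ↥(W ⊓ U) := by
    rw [hkerc, finrank_comap_subtype]
  omega

end Span

section Fiber

variable {K V : Type*} [Field K] [Fintype K] [AddCommGroup V] [Module K V]
  [FiniteDimensional K V]

lemma card_fiber (U W : Submodule K V) (d r : ℕ)
    (hWU : finrank K ↥(W ⊓ U) = d) (hW : finrank K W = d + r) :
    Nat.card {p : (Fin d → V) × (Fin r → V) //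
        (((∀ i, p.1 i ∈ U) ∧ LinearIndependent K p.1) ∧
          LinearIndependent K (U.mkQ ∘ p.2)) ∧
          span K (Set.range (Sum.elim p.1 p.2)) = W} =
      (∏ i : Fin d, (Fintype.card K ^ d - Fintype.card K ^ i.val)) *
        ((∏ j : Fin r, (Fintype.card K ^ r - Fintype.card K ^ j.val)) *
          Fintype.card K ^ (d * r)) := by
  classical
  set S' : Submodule K W := Submodule.comap W.subtype U with hS'def
  have hS' : finrank K S' = d := by rw [hS'def, finrank_comap_subtype]; exact hWU
  have hQ : finrank K (W ⧸ S') = r := by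
    have h := S'.finrank_quotient_add_finrank
    rw [hS'] at h
    omega
  set g : (W ⧸ S') →ₗ[K] V ⧸ U := S'.mapQ U W.subtype le_rfl with hgdef
  have hg : ∀ x : W, g (S'.mkQ x) = U.mkQ (x : V) := fun x => by
    simp [hgdef, Submodule.mapQ_apply]
  have hgker : LinearMap.ker g = ⊥ := by
    rw [eq_bot_iff]
    rintro x hx
    obtain ⟨y, rfl⟩ := S'.mkQ_surjective x
    have h0 : U.mkQ (y : V) = 0 := by rw [← hg]; exact hx
    have hyU : (y : V) ∈ U := by
      rwa [Submodule.mkQ_apply, Submodule.Quotient.mk_eq_zero] at h0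
    have hyS : y ∈ S' := Submodule.mem_comap.2 hyU
    simpa [Submodule.mkQ_apply, Submodule.Quotient.mk_eq_zero] using hyS
  have e : {p : (Fin d → V) × (Fin r → V) //
        (((∀ i, p.1 i ∈ U) ∧ LinearIndependent K p.1) ∧
          LinearIndependent K (U.mkQ ∘ p.2)) ∧
          span K (Set.range (Sum.elim p.1 p.2)) = W} ≃
      {p : (Fin d → W) × (Fin r → W) //
        ((∀ i, p.1 i ∈ S') ∧ LinearIndependent K p.1) ∧
          LinearIndependent K (S'.mkQ ∘ p.2)} :=
  { toFun := fun p => by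
      have hsp := p.2.2
      have haW : ∀ i, p.1.1 i ∈ W := fun i => by
        have h := subset_span (R := K) (Set.mem_range_self (f := Sum.elim p.1.1 p.1.2) (Sum.inl i))
        rwa [hsp] at h
      have hbW : ∀ j, p.1.2 j ∈ W := fun j => by
        have h := subset_span (R := K) (Set.mem_range_self (f := Sum.elim p.1.1 p.1.2) (Sum.inr j))
        rwa [hsp] at h
      refine ⟨(fun i => ⟨p.1.1 i, haW i⟩, fun j => ⟨p.1.2 j, hbW j⟩), ⟨?_, ?_⟩, ?_⟩
      · intro i
        exact Submodule.mem_comap.2 (p.2.1.1.1 i)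
      · exact (LinearMap.linearIndependent_iff W.subtype W.ker_subtype).mp
          (by exact p.2.1.1.2)
      · refine LinearIndependent.of_comp g ?_
        have hc : ⇑g ∘ (⇑S'.mkQ ∘ (fun j => (⟨p.1.2 j, hbW j⟩ : W))) =
            ⇑U.mkQ ∘ p.1.2 := funext fun j => hg _
        rw [hc]
        exact p.2.1.2
    invFun := fun p => by
      have haU : ∀ i, ((p.1.1 i : W) : V) ∈ U := fun i =>
        Submodule.mem_comap.1 (p.2.1.1 i)
      have hla : LinearIndependent K (fun i => ((p.1.1 i : W) : V)) :=
        p.2.1.2.map' W.subtype W.ker_subtype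
      have hlb : LinearIndependent K (⇑U.mkQ ∘ (fun j => ((p.1.2 j : W) : V))) := by
        have h := p.2.2.map' g hgker
        have hc : ⇑g ∘ (⇑S'.mkQ ∘ p.1.2) = ⇑U.mkQ ∘ (fun j => ((p.1.2 j : W) : V)) :=
          funext fun j => hg _
        rwa [hc] at h
      refine ⟨((fun i => ((p.1.1 i : W) : V)), (fun j => ((p.1.2 j : W) : V))),
        ⟨⟨haU, hla⟩, hlb⟩, ?_⟩
      have hle : span K (Set.range (Sum.elim (fun i => ((p.1.1 i : W) : V))
          (fun j => ((p.1.2 j : W) : V)))) ≤ W := by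
        rw [Submodule.span_le]
        rintro x ⟨i | j, rfl⟩
        · exact (p.1.1 i : W).2
        · exact (p.1.2 j : W).2
      refine Submodule.eq_of_le_of_finrank_eq hle ?_
      rw [finrank_span_eq_card (li_sum U _ _ haU hla hlb), hW]
      simp
    left_inv := fun p => Subtype.ext (Prod.ext (funext fun i => rfl) (funext fun j => rfl))
    right_inv := fun p => Subtype.ext (Prod.ext (funext fun i => Subtype.ext rfl)
      (funext fun j => Subtype.ext rfl)) }
  rw [Nat.card_congr e, card_pairs S' d r (le_of_eq hS'.symm) (le_of_eq hQ.symm), hS', hQ]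


end Fiber

lemma cast_prod_sub (q s t : ℕ) (hq : 0 < q) (h : s ≤ t) :
    ((∏ i : Fin s, (q ^ t - q ^ i.val) : ℕ) : ℝ) =
      ∏ i : Fin s, ((q : ℝ) ^ t - (q : ℝ) ^ i.val) := by
  rw [Nat.cast_prod]
  apply Finset.prod_congr rfl
  intro i _
  rw [Nat.cast_sub (Nat.pow_le_pow_right hq (le_trans (le_of_lt i.2) h))]
  push_cast; ring

lemma gauss_ratio (q s t : ℕ) (hq : 1 < q) (h : s ≤ t) :
    gaussBinomial q t s * ∏ i : Fin s, ((q : ℝ) ^ s - (q : ℝ) ^ i.val) =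
      ∏ i : Fin s, ((q : ℝ) ^ t - (q : ℝ) ^ i.val) := by
  rw [gaussBinomial, ← Fin.prod_univ_eq_prod_range
    (fun j => ((q : ℝ) ^ (t - j) - 1) / ((q : ℝ) ^ (s - j) - 1)) s,
    ← Finset.prod_mul_distrib]
  apply Finset.prod_congr rfl
  intro i _
  have hi : i.val < s := i.2
  have hq' : (1 : ℝ) < (q : ℝ) := by exact_mod_cast hq
  have h1 : (q : ℝ) ^ s - (q : ℝ) ^ i.val = (q : ℝ) ^ i.val * ((q : ℝ) ^ (s - i.val) - 1) := by
    rw [mul_sub, mul_one, ← pow_add]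
    congr 2
    omega
  have h2 : (q : ℝ) ^ t - (q : ℝ) ^ i.val = (q : ℝ) ^ i.val * ((q : ℝ) ^ (t - i.val) - 1) := by
    rw [mul_sub, mul_one, ← pow_add]
    congr 2
    omega
  have hne : (q : ℝ) ^ (s - i.val) - 1 ≠ 0 := by
    have : (1 : ℝ) < (q : ℝ) ^ (s - i.val) := one_lt_pow₀ hq' (by omega)
    linarith
  rw [h1, h2]
  field_simp

/-- In an `n`-dimensional vector space `V` over `F_q` with a fixed `m`-dimensional
subspace `U`, the number of `k`-dimensional subspaces `W` with `dim(W ∩ U) = d`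
equals `[n-m choose k-d]_q · [m choose d]_q · q^{(m-d)(k-d)}`. -/
theorem card_subspaces_with_fixed_intersection_dim
    {K V : Type*} [Field K] [Fintype K] [AddCommGroup V] [Module K V]
    [FiniteDimensional K V]
    (n m k d : ℕ) (hdm : d ≤ m) (hmn : m ≤ n) (hdk : d ≤ k) (hkd : k - d ≤ n - m)
    (hV : Module.finrank K V = n)
    (U : Submodule K V) (hU : Module.finrank K U = m) :
    (Nat.card {W : Submodule K V //
        Module.finrank K W = k ∧ Module.finrank K ↥(W ⊓ U) = d} : ℝ)
      = gaussBinomial (Fintype.card K) (n - m) (k - d)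
          * gaussBinomial (Fintype.card K) m d
          * (Fintype.card K : ℝ) ^ ((m - d) * (k - d)) := by
  classical
  have hFV : Finite V := Module.finite_of_finite K
  have hFS : Finite (Submodule K V) :=
    Finite.of_injective (fun W => (W : Set V)) SetLike.coe_injective
  set q := Fintype.card K with hq
  have hq1 : 1 < q := Fintype.one_lt_card
  set r := k - d with hrdef
  have hkr : k = d + r := by omega
  have hQU : finrank K (V ⧸ U) = n - m := by
    have h := U.finrank_quotient_add_finrank
    rw [hU, hV] at h
    omega
  set Ω := {p : (Fin d → V) × (Fin r → V) //
      ((∀ i, p.1 i ∈ U) ∧ LinearIndependent K p.1) ∧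
        LinearIndependent K (U.mkQ ∘ p.2)} with hΩdef
  have hΩ : Nat.card Ω =
      (∏ i : Fin d, (q ^ m - q ^ i.val)) *
        ((∏ j : Fin r, (q ^ (n - m) - q ^ j.val)) * q ^ (m * r)) := by
    have h := card_pairs U d r (by rw [hU]; exact hdm) (by rw [hQU]; exact hkd)
    rwa [hU, hQU] at h
  set P := {W : Submodule K V //
      finrank K W = k ∧ finrank K ↥(W ⊓ U) = d} with hPdef
  have hΦprop : ∀ p : Ω, finrank K (span K (Set.range (Sum.elim p.1.1 p.1.2))) = k ∧
      finrank K ↥(span K (Set.range (Sum.elim p.1.1 p.1.2)) ⊓ U) = d := fun p => by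
    obtain ⟨h1, h2⟩ := span_props U p.1.1 p.1.2 p.2.1.1 p.2.1.2 p.2.2
    exact ⟨by omega, h2⟩
  set Φ : Ω → P := fun p => ⟨span K (Set.range (Sum.elim p.1.1 p.1.2)), hΦprop p⟩ with hΦdef
  set F := (∏ i : Fin d, (q ^ d - q ^ i.val)) *
        ((∏ j : Fin r, (q ^ r - q ^ j.val)) * q ^ (d * r)) with hFdef
  have hfib : ∀ W : P, Nat.card {p : Ω // Φ p = W} = F := by
    intro W
    have e : {p : Ω // Φ p = W} ≃
        {p : (Fin d → V) × (Fin r → V) //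
          (((∀ i, p.1 i ∈ U) ∧ LinearIndependent K p.1) ∧
            LinearIndependent K (U.mkQ ∘ p.2)) ∧
            span K (Set.range (Sum.elim p.1 p.2)) = W.1} :=
    { toFun := fun x => ⟨x.1.1, x.1.2, congrArg Subtype.val x.2⟩
      invFun := fun y => ⟨⟨y.1, y.2.1⟩, Subtype.ext y.2.2⟩
      left_inv := fun x => Subtype.ext (Subtype.ext rfl)
      right_inv := fun y => rfl }
    rw [Nat.card_congr e, card_fiber U W.1 d r W.2.2 (by rw [W.2.1]; omega), hFdef]
  have hsum : Nat.card Ω = Nat.card P * F := by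
    rw [Nat.card_congr (Equiv.sigmaFiberEquiv Φ).symm]
    letI : Fintype P := Fintype.ofFinite P
    letI : Fintype Ω := Fintype.ofFinite Ω
    rw [Nat.card_eq_fintype_card, Fintype.card_sigma]
    have hc : ∀ W : P, Fintype.card {p : Ω // Φ p = W} = F := fun W => by
      rw [← Nat.card_eq_fintype_card, hfib W]
    rw [Finset.sum_congr rfl (fun W _ => hc W), Finset.sum_const, smul_eq_mul,
      Finset.card_univ, Nat.card_eq_fintype_card]
  -- now the numeric part
  have hF0 : 0 < F := by
    rw [hFdef]
    apply Nat.mul_pos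
    · apply Finset.prod_pos
      intro i _
      have := Nat.pow_lt_pow_right hq1 i.2
      omega
    · apply Nat.mul_pos
      · apply Finset.prod_pos
        intro j _
        have := Nat.pow_lt_pow_right hq1 j.2
        omega
      · exact Nat.pow_pos (by omega)
  have hA : (Nat.card P : ℝ) * (F : ℝ) =
      (gaussBinomial q (n - m) r * gaussBinomial q m d * (q : ℝ) ^ ((m - d) * r)) * (F : ℝ) := by
    have h1 : (Nat.card P : ℝ) * (F : ℝ) = (Nat.card Ω : ℝ) := by
      rw [hsum]; push_cast; ring
    rw [h1, hΩ]
    push_cast [cast_prod_sub q d m (by omega) hdm, cast_prod_sub q r (n - m) (by omega) hkd,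
      cast_prod_sub q d d (by omega) le_rfl, cast_prod_sub q r r (by omega) le_rfl]
    rw [← gauss_ratio q d m hq1 hdm, ← gauss_ratio q r (n - m) hq1 hkd]
    have hpow : (q : ℝ) ^ (m * r) = (q : ℝ) ^ ((m - d) * r) * (q : ℝ) ^ (d * r) := by
      rw [← pow_add, ← add_mul, Nat.sub_add_cancel hdm]
    have hFc : (F : ℝ) = (∏ i : Fin d, ((q : ℝ) ^ d - (q : ℝ) ^ i.val)) *
        ((∏ j : Fin r, ((q : ℝ) ^ r - (q : ℝ) ^ j.val)) * (q : ℝ) ^ (d * r)) := by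
      rw [hFdef]
      push_cast [cast_prod_sub q d d (by omega) le_rfl, cast_prod_sub q r r (by omega) le_rfl]
      ring
    rw [hpow, hFc]
    ring
  have := mul_right_cancel₀ (by exact_mod_cast hF0.ne' : (F : ℝ) ≠ 0) hA
  rw [hPdef] at this
  exact this
end

section
/- Let q be a prime power, F_q the finite field with q elements, and let k, ℓ be positive integers. Fix a subspace U ⊆ F_q^{k+ℓ} with dim U = ℓ, and let p be an integer with 0 ≤ p ≤ min(k, ℓ). Then the number of k×(k+ℓ) matrices G over F_q of rank k whose row space W satisfies dim(W ∩ U) = p equals ∏_{j=0}^{k−1}(q^k − q^j) · [ℓ choose p]_q · [k choose k−p]_q · q^{(ℓ−p)(k−p)}, where [a choose b]_q denotes the Gaussian binomial coefficient [a choose b]_q = ∏_{j=0}^{b−1} (q^{a−j} − 1)/(q^{b−j} − 1). -/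
open Matrix

open Module

section Helpers

variable {K : Type*} [Field K] [Fintype K]
variable {V W : Type*} [AddCommGroup V] [Module K V] [AddCommGroup W] [Module K W]

instance linearMapFinite [Finite V] [Finite W] : Finite (V →ₗ[K] W) := FunLike.finite _

instance submoduleFinite [Finite V] : Finite (Submodule K V) :=
  Finite.of_injective (fun P => (P : Set V)) SetLike.coe_injective

/-- Counting by fibers of constant size. -/
lemma nat_card_eq_card_mul_of_fibers {S T : Type*} [Finite S] [Finite T] (f : S → T) (c : ℕ)
    (h : ∀ t : T, Nat.card {s : S // f s = t} = c) : Nat.card S = Nat.card T * c := by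
  classical
  cases nonempty_fintype S
  cases nonempty_fintype T
  calc Nat.card S = Nat.card (Σ t : T, {s : S // f s = t}) :=
        Nat.card_congr (Equiv.sigmaFiberEquiv f).symm
    _ = ∑ t : T, Nat.card {s : S // f s = t} := by
        simp [Nat.card_eq_fintype_card]
    _ = Nat.card T * c := by
        have hc : ∀ t : T, Fintype.card {s : S // f s = t} = c := fun t => by
          rw [← Nat.card_eq_fintype_card]; exact h t
        simp [hc, mul_comm]

lemma nat_card_linearMap [Finite V] [Finite W] :
    Nat.card (V →ₗ[K] W) = Fintype.card K ^ (finrank K V * finrank K W) := by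
  rw [Nat.card_congr (LinearMap.toMatrix (Module.finBasis K V) (Module.finBasis K W)).toEquiv,
    Nat.card_congr (Matrix.of (α := K)).symm]
  simp [Nat.card_fun, ← pow_mul, mul_comm]

lemma nat_card_injective_linearMap [Finite V] [Finite W]
    (h : finrank K V ≤ finrank K W) :
    Nat.card {f : V →ₗ[K] W // Function.Injective f} =
      ∏ j ∈ Finset.range (finrank K V),
        (Fintype.card K ^ finrank K W - Fintype.card K ^ j) := by
  classical
  set m := finrank K V
  let b := Module.finBasis K V
  have key : ∀ s : Fin m → W, LinearIndependent K s ↔ Function.Injective (b.constr K s) := by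
    intro s
    constructor
    · intro hs
      rw [← LinearMap.ker_eq_bot, LinearMap.ker_eq_bot']
      intro x hx
      have h2 : ∑ i, b.repr x i • s i = (b.constr K s) x := by
        simpa [_root_.map_smul, Basis.constr_basis, map_sum] using
          congrArg (b.constr K s) (b.sum_repr x)
      have h0 : ∀ i, b.repr x i = 0 :=
        Fintype.linearIndependent_iff.mp hs _ (h2.trans hx)
      have := b.sum_repr x
      simp only [h0, zero_smul, Finset.sum_const_zero] at this
      exact this.symm
    · intro hf
      have : s = (b.constr K s) ∘ b := by
        funext i; simp [Basis.constr_basis]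
      rw [this]
      exact b.linearIndependent.map' _ (LinearMap.ker_eq_bot.mpr hf)
  rw [Nat.card_congr ((Equiv.subtypeEquiv (b.constr K).toEquiv key).symm)]
  rw [card_linearIndependent (by simpa using h)]
  exact Fin.prod_univ_eq_prod_range
    (fun j => Fintype.card K ^ finrank K W - Fintype.card K ^ j) m

lemma injective_comp_subtype_iff (a : V →ₗ[K] W) (P : Submodule K V) :
    Function.Injective (a.comp P.subtype) ↔ LinearMap.ker a ⊓ P = ⊥ := by
  rw [← LinearMap.ker_eq_bot, LinearMap.ker_eq_bot']
  constructor
  · intro h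
    rw [Submodule.eq_bot_iff]
    rintro x ⟨hxa, hxP⟩
    simpa using congrArg Subtype.val (h ⟨x, hxP⟩ (by simpa using hxa))
  · intro h y hy
    have hmem : (y : V) ∈ LinearMap.ker a ⊓ P := ⟨by simpa using hy, y.2⟩
    rw [h, Submodule.mem_bot] at hmem
    exact Subtype.ext hmem

lemma finrank_map_of_disjoint [FiniteDimensional K V] (f : V →ₗ[K] W) (P : Submodule K V)
    (h : LinearMap.ker f ⊓ P = ⊥) : finrank K (P.map f) = finrank K P := by
  have h1 : P.map f = LinearMap.range (f.comp P.subtype) := by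
    rw [LinearMap.range_comp, Submodule.range_subtype]
  rw [h1, LinearMap.finrank_range_of_inj ((injective_comp_subtype_iff f P).mpr h)]

lemma card_disjoint_ker [Finite V] [Finite W] (P : Submodule K V)
    (hp : finrank K ↥P ≤ finrank K W) :
    Nat.card {a : V →ₗ[K] W // LinearMap.ker a ⊓ P = ⊥} =
      (∏ j ∈ Finset.range (finrank K ↥P),
          (Fintype.card K ^ finrank K W - Fintype.card K ^ j)) *
        Fintype.card K ^ (finrank K W * (finrank K V - finrank K ↥P)) := by
  obtain ⟨D, hD⟩ := Submodule.exists_isCompl P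
  have comp_eq : ∀ (f : ↥P →ₗ[K] W) (g : ↥D →ₗ[K] W),
      ((f.coprod g) ∘ₗ (Submodule.prodEquivOfIsCompl P D hD).symm.toLinearMap) ∘ₗ P.subtype
        = f := by
    intro f g
    ext u
    have hu : (Submodule.prodEquivOfIsCompl P D hD).symm (u : V) = (u, 0) := by
      rw [LinearEquiv.symm_apply_eq]
      simp [Submodule.coe_prodEquivOfIsCompl']
    simp [hu]
  let e : {a : V →ₗ[K] W // LinearMap.ker a ⊓ P = ⊥} ≃
      {f : ↥P →ₗ[K] W // Function.Injective f} × (↥D →ₗ[K] W) :=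
    { toFun := fun a => (⟨a.1 ∘ₗ P.subtype, (injective_comp_subtype_iff a.1 P).mpr a.2⟩,
        a.1 ∘ₗ D.subtype)
      invFun := fun fg => ⟨(fg.1.1.coprod fg.2) ∘ₗ
          (Submodule.prodEquivOfIsCompl P D hD).symm.toLinearMap, by
        rw [← injective_comp_subtype_iff, comp_eq]
        exact fg.1.2⟩
      left_inv := fun a => Subtype.ext <| by
        ext x
        obtain ⟨⟨u, d⟩, rfl⟩ := (Submodule.prodEquivOfIsCompl P D hD).surjective x
        simp [Submodule.coe_prodEquivOfIsCompl', map_add]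
      right_inv := fun fg => by
        refine Prod.ext (Subtype.ext ?_) ?_
        · exact comp_eq fg.1.1 fg.2
        · ext d
          have hd : (Submodule.prodEquivOfIsCompl P D hD).symm (d : V) = (0, d) := by
            rw [LinearEquiv.symm_apply_eq]
            simp [Submodule.coe_prodEquivOfIsCompl']
          simp [hd] }
  rw [Nat.card_congr e, Nat.card_prod, nat_card_injective_linearMap hp, nat_card_linearMap]
  have hd : finrank K ↥D = finrank K V - finrank K ↥P := by
    have := Submodule.finrank_add_eq_of_isCompl hD
    have hle : finrank K ↥P ≤ finrank K V := Submodule.finrank_le P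
    omega
  rw [hd, mul_comm (finrank K V - finrank K ↥P)]







lemma card_grassmannian_mul [Finite V] (p : ℕ) (hp : p ≤ finrank K V) :
    Nat.card {P : Submodule K V // finrank K ↥P = p} *
        ∏ j ∈ Finset.range p, (Fintype.card K ^ p - Fintype.card K ^ j)
      = ∏ j ∈ Finset.range p, (Fintype.card K ^ finrank K V - Fintype.card K ^ j) := by
  classical
  have main := nat_card_eq_card_mul_of_fibers
    (fun g : {g : Fin p → V // LinearIndependent K g} =>
      (⟨Submodule.span K (Set.range g.1), by
          rw [finrank_span_eq_card g.2, Fintype.card_fin]⟩ :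
        {P : Submodule K V // finrank K ↥P = p}))
    (∏ j ∈ Finset.range p, (Fintype.card K ^ p - Fintype.card K ^ j)) ?_
  · rw [← main, card_linearIndependent hp]
    exact Fin.prod_univ_eq_prod_range
      (fun j => Fintype.card K ^ finrank K V - Fintype.card K ^ j) p
  · rintro ⟨P, hP⟩
    have hfin : FiniteDimensional K ↥P := inferInstance
    let e : {g' : {g : Fin p → V // LinearIndependent K g} //
        (⟨Submodule.span K (Set.range g'.1), by
          rw [finrank_span_eq_card g'.2, Fintype.card_fin]⟩ :
          {P : Submodule K V // finrank K ↥P = p}) = ⟨P, hP⟩} ≃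
        {h : Fin p → ↥P // LinearIndependent K h} :=
      { toFun := fun g => ⟨fun i => ⟨g.1.1 i, by
            have hsp : Submodule.span K (Set.range g.1.1) = P :=
              congrArg Subtype.val g.2
            have hm : g.1.1 i ∈ Submodule.span K (Set.range g.1.1) :=
              Submodule.subset_span ⟨i, rfl⟩
            rwa [hsp] at hm⟩,
          LinearIndependent.of_comp P.subtype (by exact g.1.2)⟩
        invFun := fun h => ⟨⟨fun i => (h.1 i : V), h.2.map' P.subtype P.ker_subtype⟩, by
          apply Subtype.ext
          show Submodule.span K (Set.range fun i => ((h.1 i : V))) = P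
          have hLI : LinearIndependent K (fun i => ((h.1 i : V))) :=
            h.2.map' P.subtype P.ker_subtype
          have hle : Submodule.span K (Set.range fun i => ((h.1 i : V))) ≤ P := by
            rw [Submodule.span_le]
            rintro _ ⟨i, rfl⟩
            exact (h.1 i).2
          refine Submodule.eq_of_le_of_finrank_le hle ?_
          rw [hP, finrank_span_eq_card hLI, Fintype.card_fin]⟩
        left_inv := fun g => by
          apply Subtype.ext; apply Subtype.ext; rfl
        right_inv := fun h => by
          apply Subtype.ext; rfl }
    rw [Nat.card_congr e, card_linearIndependent (by rw [hP])]
    rw [hP]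
    exact Fin.prod_univ_eq_prod_range
      (fun j => Fintype.card K ^ p - Fintype.card K ^ j) p

lemma card_finrank_ker_eq [Finite V] [Finite W] (p : ℕ) (hp : p ≤ finrank K V)
    (hC : finrank K V - p ≤ finrank K W) :
    Nat.card {b : V →ₗ[K] W // finrank K ↥(LinearMap.ker b) = p} =
      Nat.card {P : Submodule K V // finrank K ↥P = p} *
        ∏ j ∈ Finset.range (finrank K V - p),
          (Fintype.card K ^ finrank K W - Fintype.card K ^ j) := by
  classical
  apply nat_card_eq_card_mul_of_fibers
    (fun b : {b : V →ₗ[K] W // finrank K ↥(LinearMap.ker b) = p} =>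
      (⟨LinearMap.ker b.1, b.2⟩ : {P : Submodule K V // finrank K ↥P = p}))
  rintro ⟨P, hP⟩
  have hfinQ : Finite (V ⧸ P) := Finite.of_surjective _ (Submodule.mkQ_surjective P)
  have hQ : finrank K (V ⧸ P) = finrank K V - p := by
    have := Submodule.finrank_quotient_add_finrank P
    omega
  let e : {b' : {b : V →ₗ[K] W // finrank K ↥(LinearMap.ker b) = p} //
      (⟨LinearMap.ker b'.1, b'.2⟩ : {P : Submodule K V // finrank K ↥P = p}) = ⟨P, hP⟩} ≃
      {h : (V ⧸ P) →ₗ[K] W // Function.Injective h} :=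
    { toFun := fun b => ⟨P.liftQ b.1.1 (congrArg Subtype.val b.2).ge, by
        rw [← LinearMap.ker_eq_bot]
        exact Submodule.ker_liftQ_eq_bot _ _ _ (congrArg Subtype.val b.2).le⟩
      invFun := fun h => ⟨⟨h.1 ∘ₗ P.mkQ, by
          rw [LinearMap.ker_comp, LinearMap.ker_eq_bot.mpr h.2, Submodule.comap_bot,
            Submodule.ker_mkQ, hP]⟩, by
        apply Subtype.ext
        show LinearMap.ker (h.1 ∘ₗ P.mkQ) = P
        rw [LinearMap.ker_comp, LinearMap.ker_eq_bot.mpr h.2, Submodule.comap_bot,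
          Submodule.ker_mkQ]⟩
      left_inv := fun b => by
        apply Subtype.ext; apply Subtype.ext
        exact Submodule.liftQ_mkQ _ _ _
      right_inv := fun h => by
        apply Subtype.ext
        exact Submodule.linearMap_qext _ (Submodule.liftQ_mkQ _ _ _) }
  rw [Nat.card_congr e, nat_card_injective_linearMap (by rw [hQ]; exact hC), hQ]

end Helpers
section MainCount

variable {K : Type*} [Field K] [Fintype K]

lemma matrix_rank_eq_iff_injective {k n : ℕ} (G : Matrix (Fin k) (Fin n) K) :
    G.rank = k ↔ Function.Injective G.vecMulLinear := by
  rw [Matrix.rank_eq_finrank_span_row, ← range_vecMulLinear, ← LinearMap.ker_eq_bot,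
    ← Submodule.finrank_eq_zero (R := K)]
  have hrn := LinearMap.finrank_range_add_finrank_ker G.vecMulLinear
  rw [Module.finrank_fintype_fun_eq_card, Fintype.card_fin] at hrn
  have h1 : finrank K (LinearMap.range G.vecMulLinear) ≤ k := by omega
  constructor <;> (intro h; omega)

theorem count_nat (k ℓ p : ℕ) (U : Submodule K (Fin (k + ℓ) → K))
    (hU : finrank K ↥U = ℓ) (hpk : p ≤ k) (hpl : p ≤ ℓ) :
    Nat.card {φ : (Fin k → K) →ₗ[K] (Fin (k + ℓ) → K) //
        Function.Injective φ ∧ finrank K ↥(LinearMap.range φ ⊓ U) = p} *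
      ∏ j ∈ Finset.range p, (Fintype.card K ^ p - Fintype.card K ^ j)
    = (∏ j ∈ Finset.range p, (Fintype.card K ^ k - Fintype.card K ^ j)) *
        ((∏ j ∈ Finset.range (k - p), (Fintype.card K ^ k - Fintype.card K ^ j)) *
          ((∏ j ∈ Finset.range p, (Fintype.card K ^ ℓ - Fintype.card K ^ j)) *
            Fintype.card K ^ (ℓ * (k - p)))) := by
  classical
  have hdimV : finrank K (Fin (k + ℓ) → K) = k + ℓ := by
    simp [Module.finrank_fintype_fun_eq_card]
  have hdimM : finrank K (Fin k → K) = k := by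
    simp [Module.finrank_fintype_fun_eq_card]
  obtain ⟨C, hUC⟩ := Submodule.exists_isCompl U
  have hdimC : finrank K ↥C = k := by
    have := Submodule.finrank_add_eq_of_isCompl hUC
    rw [hU, hdimV] at this; omega
  -- the equivalence between pairs and maps
  let E : (((Fin k → K) →ₗ[K] ↥U) × ((Fin k → K) →ₗ[K] ↥C)) ≃
      ((Fin k → K) →ₗ[K] (Fin (k + ℓ) → K)) :=
    (LinearMap.prodEquiv K).toEquiv.trans
      (LinearEquiv.arrowCongr (LinearEquiv.refl K _)
        (Submodule.prodEquivOfIsCompl U C hUC)).toEquiv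
  have hE : ∀ x v, E x v = ((x.1 v : Fin (k + ℓ) → K)) + (x.2 v : Fin (k + ℓ) → K) := by
    intro x v
    simp [E, LinearMap.prodEquiv, LinearEquiv.arrowCongr,
      Submodule.coe_prodEquivOfIsCompl']
    rfl
  have hzero : ∀ (u : ↥U) (c : ↥C), (u : Fin (k + ℓ) → K) + (c : Fin (k + ℓ) → K) = 0 →
      u = 0 ∧ c = 0 := by
    intro u c h
    have hu : (u : Fin (k + ℓ) → K) = -(c : Fin (k + ℓ) → K) := by
      rw [eq_neg_iff_add_eq_zero]; exact h
    have humem : (u : Fin (k + ℓ) → K) ∈ C := by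
      rw [hu]; exact C.neg_mem c.2
    have hu0 : (u : Fin (k + ℓ) → K) = 0 :=
      Submodule.disjoint_def.mp hUC.disjoint _ u.2 humem
    constructor
    · exact Subtype.ext hu0
    · apply Subtype.ext
      have := h
      rw [hu0, zero_add] at this
      exact this
  have hker : ∀ x, LinearMap.ker (E x) = LinearMap.ker x.1 ⊓ LinearMap.ker x.2 := by
    intro x
    ext v
    simp only [LinearMap.mem_ker, Submodule.mem_inf, hE]
    constructor
    · intro h
      obtain ⟨h1, h2⟩ := hzero _ _ h
      exact ⟨h1, h2⟩
    · rintro ⟨h1, h2⟩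
      rw [h1, h2]
      simp
  have hrange : ∀ x, LinearMap.range (E x) ⊓ U =
      Submodule.map (U.subtype ∘ₗ x.1) (LinearMap.ker x.2) := by
    intro x
    ext v
    simp only [Submodule.mem_inf, LinearMap.mem_range, Submodule.mem_map, LinearMap.mem_ker]
    constructor
    · rintro ⟨⟨w, hw⟩, hvU⟩
      rw [hE] at hw
      have hcv : (x.2 w : Fin (k + ℓ) → K) = v - (x.1 w : Fin (k + ℓ) → K) := by
        rw [← hw]; ring
      have hcmem : (x.2 w : Fin (k + ℓ) → K) ∈ U := by
        rw [hcv]; exact U.sub_mem hvU (x.1 w).2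
      have hc0 : (x.2 w : Fin (k + ℓ) → K) = 0 :=
        Submodule.disjoint_def.mp hUC.disjoint _ hcmem (x.2 w).2
      refine ⟨w, Subtype.ext hc0, ?_⟩
      simp only [LinearMap.coe_comp, Function.comp_apply, Submodule.coe_subtype]
      rw [← hw, hc0, add_zero]
    · rintro ⟨w, hw0, rfl⟩
      refine ⟨⟨w, ?_⟩, (x.1 w).2⟩
      rw [hE, hw0]
      simp
  have condIff : ∀ x, (LinearMap.ker x.1 ⊓ LinearMap.ker x.2 = ⊥ ∧
        finrank K ↥(LinearMap.ker x.2) = p) ↔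
      (Function.Injective (E x) ∧ finrank K ↥(LinearMap.range (E x) ⊓ U) = p) := by
    intro x
    have hinj : Function.Injective (E x) ↔ LinearMap.ker x.1 ⊓ LinearMap.ker x.2 = ⊥ := by
      rw [← LinearMap.ker_eq_bot, hker]
    have hker1 : LinearMap.ker (U.subtype ∘ₗ x.1) = LinearMap.ker x.1 := by
      rw [LinearMap.ker_comp, Submodule.ker_subtype, Submodule.comap_bot]
    constructor
    · rintro ⟨h1, h2⟩
      refine ⟨hinj.mpr h1, ?_⟩
      rw [hrange, finrank_map_of_disjoint, h2]
      rw [hker1]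
      rw [← le_bot_iff, ← h1]
    · rintro ⟨h1, h2⟩
      have h1' := hinj.mp h1
      refine ⟨h1', ?_⟩
      rw [hrange, finrank_map_of_disjoint] at h2
      · exact h2
      · rw [hker1, ← le_bot_iff, ← h1']
  have stepB : Nat.card {φ : (Fin k → K) →ₗ[K] (Fin (k + ℓ) → K) //
        Function.Injective φ ∧ finrank K ↥(LinearMap.range φ ⊓ U) = p} =
      Nat.card {x : (((Fin k → K) →ₗ[K] ↥U) × ((Fin k → K) →ₗ[K] ↥C)) //
        LinearMap.ker x.1 ⊓ LinearMap.ker x.2 = ⊥ ∧ finrank K ↥(LinearMap.ker x.2) = p} :=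
    (Nat.card_congr (Equiv.subtypeEquiv E condIff)).symm
  -- Step C : fiber over the second component
  have stepC : Nat.card {x : (((Fin k → K) →ₗ[K] ↥U) × ((Fin k → K) →ₗ[K] ↥C)) //
        LinearMap.ker x.1 ⊓ LinearMap.ker x.2 = ⊥ ∧ finrank K ↥(LinearMap.ker x.2) = p} =
      Nat.card {b : (Fin k → K) →ₗ[K] ↥C // finrank K ↥(LinearMap.ker b) = p} *
        ((∏ j ∈ Finset.range p, (Fintype.card K ^ ℓ - Fintype.card K ^ j)) *
          Fintype.card K ^ (ℓ * (k - p))) := by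
    apply nat_card_eq_card_mul_of_fibers (fun x => ⟨x.1.2, x.2.2⟩)
    rintro ⟨b₀, hb₀⟩
    let e : {x : {x : (((Fin k → K) →ₗ[K] ↥U) × ((Fin k → K) →ₗ[K] ↥C)) //
          LinearMap.ker x.1 ⊓ LinearMap.ker x.2 = ⊥ ∧ finrank K ↥(LinearMap.ker x.2) = p} //
          (⟨x.1.2, x.2.2⟩ : {b : (Fin k → K) →ₗ[K] ↥C // finrank K ↥(LinearMap.ker b) = p})
            = ⟨b₀, hb₀⟩} ≃
        {a : (Fin k → K) →ₗ[K] ↥U // LinearMap.ker a ⊓ LinearMap.ker b₀ = ⊥} :=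
      { toFun := fun xx => ⟨xx.1.1.1, by
          have hb : xx.1.1.2 = b₀ := congrArg Subtype.val xx.2
          have h := xx.1.2.1
          rw [hb] at h
          exact h⟩
        invFun := fun a => ⟨⟨(a.1, b₀), ⟨a.2, hb₀⟩⟩, rfl⟩
        left_inv := fun xx => by
          apply Subtype.ext; apply Subtype.ext
          exact Prod.ext rfl (congrArg Subtype.val xx.2).symm
        right_inv := fun a => rfl }
    rw [Nat.card_congr e, card_disjoint_ker _ (by rw [hb₀, hU]; exact hpl), hb₀, hU, hdimM]
  -- Step D : count b's
  have stepD : Nat.card {b : (Fin k → K) →ₗ[K] ↥C // finrank K ↥(LinearMap.ker b) = p} =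
      Nat.card {P : Submodule K (Fin k → K) // finrank K ↥P = p} *
        ∏ j ∈ Finset.range (k - p),
          (Fintype.card K ^ k - Fintype.card K ^ j) := by
    have := card_finrank_ker_eq (V := Fin k → K) (W := ↥C) (K := K) p
      (by rw [hdimM]; exact hpk) (by rw [hdimM, hdimC]; omega)
    rw [hdimM, hdimC] at this
    exact this
  -- Step E : Grassmannian
  have stepE := card_grassmannian_mul (V := Fin k → K) (K := K) p (by rw [hdimM]; exact hpk)
  rw [hdimM] at stepE
  rw [stepB, stepC, stepD]
  calc Nat.card {P : Submodule K (Fin k → K) // finrank K ↥P = p} *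
        (∏ j ∈ Finset.range (k - p), (Fintype.card K ^ k - Fintype.card K ^ j)) *
        ((∏ j ∈ Finset.range p, (Fintype.card K ^ ℓ - Fintype.card K ^ j)) *
          Fintype.card K ^ (ℓ * (k - p))) *
        ∏ j ∈ Finset.range p, (Fintype.card K ^ p - Fintype.card K ^ j)
      = Nat.card {P : Submodule K (Fin k → K) // finrank K ↥P = p} *
          (∏ j ∈ Finset.range p, (Fintype.card K ^ p - Fintype.card K ^ j)) *
          ((∏ j ∈ Finset.range (k - p), (Fintype.card K ^ k - Fintype.card K ^ j)) *
            ((∏ j ∈ Finset.range p, (Fintype.card K ^ ℓ - Fintype.card K ^ j)) *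
              Fintype.card K ^ (ℓ * (k - p)))) := by ring
    _ = _ := by rw [stepE]

end MainCount
section FinalAlgebra

lemma cast_prod_pow (c : ℕ) (hc : 1 ≤ c) {m n : ℕ} (h : m ≤ n) :
    ((∏ j ∈ Finset.range m, (c ^ n - c ^ j) : ℕ) : ℝ) =
      ∏ j ∈ Finset.range m, ((c : ℝ) ^ n - (c : ℝ) ^ j) := by
  rw [Nat.cast_prod]
  apply Finset.prod_congr rfl
  intro j hj
  have hj' : j < m := Finset.mem_range.mp hj
  have hle : c ^ j ≤ c ^ n := Nat.pow_le_pow_right hc (by omega)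
  rw [Nat.cast_sub hle]
  push_cast
  ring

lemma gaussBinomial_mul (c : ℕ) (hc : 1 < c) {a b : ℕ} (h : b ≤ a) :
    gaussBinomial c a b * ∏ j ∈ Finset.range b, ((c : ℝ) ^ b - (c : ℝ) ^ j)
      = ∏ j ∈ Finset.range b, ((c : ℝ) ^ a - (c : ℝ) ^ j) := by
  have hc' : (1 : ℝ) < (c : ℝ) := by exact_mod_cast hc
  unfold gaussBinomial
  rw [← Finset.prod_mul_distrib]
  apply Finset.prod_congr rfl
  intro j hj
  have hj' : j < b := Finset.mem_range.mp hj
  have hden : ((c : ℝ) ^ (b - j) - 1) ≠ 0 := by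
    have : (1 : ℝ) < (c : ℝ) ^ (b - j) := one_lt_pow₀ hc' (by omega)
    linarith
  have hb' : (c : ℝ) ^ j * (c : ℝ) ^ (b - j) = (c : ℝ) ^ b := by
    rw [← pow_add]; congr 1; omega
  have ha' : (c : ℝ) ^ j * (c : ℝ) ^ (a - j) = (c : ℝ) ^ a := by
    rw [← pow_add]; congr 1; omega
  rw [div_mul_eq_mul_div, div_eq_iff hden, ← hb', ← ha']
  ring

lemma prod_pow_split (Q : ℝ) {p k : ℕ} (h : p ≤ k) :
    ∏ j ∈ Finset.range k, (Q ^ k - Q ^ j) =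
      (∏ j ∈ Finset.range p, (Q ^ k - Q ^ j)) *
        (Q ^ (p * (k - p)) * ∏ j ∈ Finset.range (k - p), (Q ^ (k - p) - Q ^ j)) := by
  obtain ⟨m, rfl⟩ : ∃ m, k = p + m := ⟨k - p, by omega⟩
  simp only [Nat.add_sub_cancel_left]
  rw [Finset.prod_range_add]
  congr 1
  have hterm : ∀ i ∈ Finset.range m, Q ^ (p + m) - Q ^ (p + i) = Q ^ p * (Q ^ m - Q ^ i) := by
    intro i _
    rw [pow_add, pow_add]; ring
  rw [Finset.prod_congr rfl hterm, Finset.prod_mul_distrib, Finset.prod_const, ← pow_mul, Finset.card_range]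

end FinalAlgebra

/-- For a fixed `ℓ`-dimensional subspace `U ⊆ F_q^{k+ℓ}` and `0 ≤ p ≤ min(k,ℓ)`,
the number of `k × (k+ℓ)` matrices `G` over `F_q` of rank `k` whose row space `W`
satisfies `dim(W ∩ U) = p` equals
`∏_{j=0}^{k-1}(q^k - q^j) · [ℓ choose p]_q · [k choose k-p]_q · q^{(ℓ-p)(k-p)}`. -/
theorem card_full_rank_matrices_with_fixed_intersection_dim
    {K : Type*} [Field K] [Fintype K]
    (k ℓ : ℕ) (hk : 0 < k) (hℓ : 0 < ℓ)
    (U : Submodule K (Fin (k + ℓ) → K)) (hU : Module.finrank K U = ℓ)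
    (p : ℕ) (hp : p ≤ min k ℓ) :
    (Nat.card {G : Matrix (Fin k) (Fin (k + ℓ)) K //
        G.rank = k ∧
        Module.finrank K ↥(Submodule.span K (Set.range G) ⊓ U) = p} : ℝ)
      = (∏ j ∈ Finset.range k,
            ((Fintype.card K : ℝ) ^ k - (Fintype.card K : ℝ) ^ j))
          * gaussBinomial (Fintype.card K) ℓ p
          * gaussBinomial (Fintype.card K) k (k - p)
          * (Fintype.card K : ℝ) ^ ((ℓ - p) * (k - p)) := by
  classical
  have hpk : p ≤ k := le_trans hp (min_le_left k ℓ)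
  have hpl : p ≤ ℓ := le_trans hp (min_le_right k ℓ)
  have hq : 1 < Fintype.card K := Fintype.one_lt_card
  have hqR : (1 : ℝ) < (Fintype.card K : ℝ) := by exact_mod_cast hq
  -- Step A : matrices correspond to injective linear maps
  have stepA : Nat.card {G : Matrix (Fin k) (Fin (k + ℓ)) K //
        G.rank = k ∧ Module.finrank K ↥(Submodule.span K (Set.range G) ⊓ U) = p}
      = Nat.card {φ : (Fin k → K) →ₗ[K] (Fin (k + ℓ) → K) //
        Function.Injective φ ∧ Module.finrank K ↥(LinearMap.range φ ⊓ U) = p} := by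
    apply Nat.card_congr
    refine Equiv.subtypeEquiv (LinearMap.toMatrixRight' (R := K)).symm.toEquiv fun G => ?_
    have h1 : (LinearMap.toMatrixRight' (R := K)).symm.toEquiv G = G.vecMulLinear := rfl
    rw [h1]
    exact and_congr (matrix_rank_eq_iff_injective G) (by rw [range_vecMulLinear]; rfl)
  -- natural number count
  have hcount := count_nat (K := K) k ℓ p U hU hpk hpl
  -- cast it to the reals
  set Q : ℝ := (Fintype.card K : ℝ) with hQdef
  set N : ℕ := Nat.card {φ : (Fin k → K) →ₗ[K] (Fin (k + ℓ) → K) //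
        Function.Injective φ ∧ Module.finrank K ↥(LinearMap.range φ ⊓ U) = p} with hN
  have NB : (N : ℝ) * ∏ j ∈ Finset.range p, (Q ^ p - Q ^ j)
      = (∏ j ∈ Finset.range p, (Q ^ k - Q ^ j)) *
          ((∏ j ∈ Finset.range (k - p), (Q ^ k - Q ^ j)) *
            ((∏ j ∈ Finset.range p, (Q ^ ℓ - Q ^ j)) * Q ^ (ℓ * (k - p)))) := by
    have := congrArg (fun x : ℕ => (x : ℝ)) hcount
    simpa [Nat.cast_mul, cast_prod_pow (Fintype.card K) hq.le le_rfl,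
      cast_prod_pow (Fintype.card K) hq.le hpk,
      cast_prod_pow (Fintype.card K) hq.le (Nat.sub_le k p),
      cast_prod_pow (Fintype.card K) hq.le hpl, Nat.cast_pow] using this
  have hBp : (∏ j ∈ Finset.range p, (Q ^ p - Q ^ j)) ≠ 0 := by
    apply ne_of_gt
    apply Finset.prod_pos
    intro j hj
    have hj' : j < p := Finset.mem_range.mp hj
    have : Q ^ j < Q ^ p := pow_lt_pow_right₀ hqR hj'
    linarith
  have g1 := gaussBinomial_mul (Fintype.card K) hq hpl
  have g2 := gaussBinomial_mul (Fintype.card K) hq (Nat.sub_le k p)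
  have e2 := prod_pow_split Q hpk
  have e3 : Q ^ ((ℓ - p) * (k - p)) * Q ^ (p * (k - p)) = Q ^ (ℓ * (k - p)) := by
    rw [← pow_add, ← add_mul, Nat.sub_add_cancel hpl]
  rw [stepA]
  apply mul_right_cancel₀ hBp
  rw [NB, ← g1, ← g2, ← e3, e2]
  ring
end

section
/- Let q ≥ 2 be an integer and let k, t : ℕ → ℕ be functions with k(n) ≤ n, such that k(n)/n → R and t(n)/n → T as n → ∞, where 0 < R < 1, 0 < T, and T(q−1)/q < 1 − R. For each n set v(n) = ⌊t(n)(q−1)/q⌋. Then (1/n)·log_q [ q^{t(n)}·C(n, v(n)) / ( C(t(n), v(n))·(q−1)^{v(n)}·C(n−k(n), v(n)) ) ] → H(1, V) − H(1−R, V) as n → ∞, where V = T(q−1)/q, C(·,·) denotes the binomial coefficient, and H(F,G) := F log_q F − G log_q G − (F−G) log_q (F−G) with log_q the logarithm to base q. -/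
open Filter Real


private lemma hlogdiv : Tendsto (fun x : ℝ => Real.log x / x) atTop (nhds 0) := by
  simpa using Real.tendsto_pow_log_div_mul_add_atTop 1 0 1 one_ne_zero

private lemma tendsto_log_factorial_sub :
    Tendsto (fun m : ℕ => (Real.log (Nat.factorial m) - m * Real.log m + m) / m)
      atTop (nhds 0) := by
  have h1 : Tendsto (fun m : ℕ => Real.log (Stirling.stirlingSeq m) / m) atTop (nhds 0) := by
    have hs : Tendsto (fun m : ℕ => Real.log (Stirling.stirlingSeq m)) atTop
        (nhds (Real.log (Real.sqrt π))) :=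
      Stirling.tendsto_stirlingSeq_sqrt_pi.log (by positivity)
    have hinv : Tendsto (fun m : ℕ => (1:ℝ) / m) atTop (nhds 0) :=
      tendsto_const_div_atTop_nhds_zero_nat 1
    have := hs.mul hinv
    simpa [div_eq_mul_inv, mul_comm] using this
  have h2 : Tendsto (fun m : ℕ => Real.log (2 * (m:ℝ)) / m) atTop (nhds 0) := by
    have ha : Tendsto (fun m : ℕ => Real.log 2 / m) atTop (nhds 0) :=
      tendsto_const_div_atTop_nhds_zero_nat _
    have hb : Tendsto (fun m : ℕ => Real.log m / m) atTop (nhds 0) :=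
      hlogdiv.comp tendsto_natCast_atTop_atTop
    have := ha.add hb
    rw [add_zero] at this
    refine this.congr' ?_
    filter_upwards [eventually_ge_atTop 1] with m hm
    have hm0 : (0:ℝ) < m := by exact_mod_cast hm
    rw [Real.log_mul two_ne_zero (ne_of_gt hm0), add_div]
  have := h1.add (h2.const_mul (1/2 : ℝ))
  rw [mul_zero, add_zero] at this
  refine this.congr' ?_
  filter_upwards [eventually_ge_atTop 1] with m hm
  have hm0 : (0:ℝ) < m := by exact_mod_cast hm
  have hf := Stirling.log_stirlingSeq_formula m
  have hlm : Real.log ((m:ℝ) / Real.exp 1) = Real.log m - 1 := by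
    rw [Real.log_div (ne_of_gt hm0) (Real.exp_ne_zero 1), Real.log_exp]
  rw [hlm] at hf
  rw [hf]; ring


private lemma tendsto_atTop_of_ratio {c : ℕ → ℕ} {C : ℝ} (hC : 0 < C)
    (h : Tendsto (fun n => (c n : ℝ) / n) atTop (nhds C)) : Tendsto c atTop atTop := by
  rw [← tendsto_natCast_atTop_iff (R := ℝ)]
  have hev : ∀ᶠ n : ℕ in atTop, C / 2 * n ≤ (c n : ℝ) := by
    filter_upwards [h.eventually (eventually_ge_nhds (by linarith : C / 2 < C)),
      eventually_gt_atTop 0] with n hn hn0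
    have hn0' : (0:ℝ) < n := by exact_mod_cast hn0
    have : C / 2 * n ≤ (c n : ℝ) / n * n := by nlinarith
    rwa [div_mul_cancel₀ _ (ne_of_gt hn0')] at this
  refine tendsto_atTop_mono' _ hev ?_
  exact Tendsto.const_mul_atTop (by linarith) tendsto_natCast_atTop_atTop



private lemma tendsto_log_choose (a w : ℕ → ℕ) (A V : ℝ) (hV : 0 < V) (hAV : V < A)
    (hwa : ∀ᶠ n in atTop, w n ≤ a n)
    (ha : Tendsto (fun n => (a n : ℝ) / n) atTop (nhds A))
    (hw : Tendsto (fun n => (w n : ℝ) / n) atTop (nhds V)) :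
    Tendsto (fun n => Real.log ((a n).choose (w n)) / n) atTop
      (nhds (A * Real.log A - V * Real.log V - (A - V) * Real.log (A - V))) := by
  set f : ℕ → ℝ := fun m => Real.log (Nat.factorial m) - m * Real.log m + m with hfdef
  have hA : 0 < A := hV.trans hAV
  have hb : Tendsto (fun n => ((a n - w n : ℕ) : ℝ) / n) atTop (nhds (A - V)) := by
    refine (ha.sub hw).congr' ?_
    filter_upwards [hwa] with n hn
    rw [Nat.cast_sub hn, sub_div]
  have haT : Tendsto a atTop atTop := tendsto_atTop_of_ratio hA ha
  have hwT : Tendsto w atTop atTop := tendsto_atTop_of_ratio hV hw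
  have hbT : Tendsto (fun n => a n - w n) atTop atTop :=
    tendsto_atTop_of_ratio (by linarith) hb
  have hfratio : ∀ (c : ℕ → ℕ) (C : ℝ), Tendsto c atTop atTop →
      Tendsto (fun n => (c n : ℝ) / n) atTop (nhds C) →
      Tendsto (fun n => f (c n) / n) atTop (nhds 0) := by
    intro c C hcT hc
    have h1 : Tendsto (fun n => f (c n) / (c n : ℝ)) atTop (nhds 0) :=
      tendsto_log_factorial_sub.comp hcT
    have h2 := h1.mul hc
    rw [zero_mul] at h2
    refine h2.congr' ?_
    filter_upwards [hcT.eventually_ge_atTop 1] with n h1n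
    have hc0 : ((c n : ℝ)) ≠ 0 := (Nat.cast_pos.mpr (by omega)).ne'
    rw [div_mul_div_comm, mul_comm (f (c n)), mul_div_mul_left _ _ hc0]
  have hfa := hfratio a A haT ha
  have hfw := hfratio w V hwT hw
  have hfb := hfratio (fun n => a n - w n) (A - V) hbT hb
  have hE : Tendsto (fun n => (a n : ℝ) / n * Real.log ((a n : ℝ) / n)
      - (w n : ℝ) / n * Real.log ((w n : ℝ) / n)
      - ((a n - w n : ℕ) : ℝ) / n * Real.log (((a n - w n : ℕ) : ℝ) / n)) atTop
      (nhds (A * Real.log A - V * Real.log V - (A - V) * Real.log (A - V))) :=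
    ((ha.mul (ha.log hA.ne')).sub (hw.mul (hw.log hV.ne'))).sub
      (hb.mul (hb.log (by linarith : A - V ≠ 0)))
  have hcomb : Tendsto (fun n => f (a n) / n - f (w n) / n - f (a n - w n) / n
      + ((a n : ℝ) / n * Real.log ((a n : ℝ) / n)
        - (w n : ℝ) / n * Real.log ((w n : ℝ) / n)
        - ((a n - w n : ℕ) : ℝ) / n * Real.log (((a n - w n : ℕ) : ℝ) / n))) atTop
      (nhds (A * Real.log A - V * Real.log V - (A - V) * Real.log (A - V))) := by
    have := ((hfa.sub hfw).sub hfb).add hE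
    simpa using this
  refine hcomb.congr' ?_
  filter_upwards [hwa, haT.eventually_ge_atTop 1, hwT.eventually_ge_atTop 1,
    hbT.eventually_ge_atTop 1, eventually_ge_atTop 1] with n hwan ha1 hw1 hb1 hn1
  have hx0 : (0:ℝ) < (a n : ℝ) := Nat.cast_pos.mpr (by omega)
  have hy0 : (0:ℝ) < (w n : ℝ) := Nat.cast_pos.mpr (by omega)
  have hz0 : (0:ℝ) < ((a n - w n : ℕ) : ℝ) := Nat.cast_pos.mpr (by omega)
  have hN0 : (0:ℝ) < (n : ℝ) := Nat.cast_pos.mpr (by omega)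
  have h1 : Real.log ((a n).choose (w n) : ℝ) = Real.log ((a n).factorial : ℝ)
      - Real.log ((w n).factorial : ℝ) - Real.log (((a n - w n).factorial : ℝ)) := by
    have hfact := Nat.choose_mul_factorial_mul_factorial hwan
    have hcast : (((a n).choose (w n) : ℝ)) * ((w n).factorial : ℝ)
        * (((a n - w n).factorial : ℝ)) = ((a n).factorial : ℝ) := by
      exact_mod_cast congrArg (Nat.cast : ℕ → ℝ) hfact
    have hch : (0:ℝ) < ((a n).choose (w n) : ℝ) := Nat.cast_pos.mpr (Nat.choose_pos hwan)
    have hf1 : (0:ℝ) < ((w n).factorial : ℝ) := Nat.cast_pos.mpr (Nat.factorial_pos _)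
    have hf2 : (0:ℝ) < (((a n - w n).factorial : ℝ)) := Nat.cast_pos.mpr (Nat.factorial_pos _)
    rw [← hcast, Real.log_mul (by positivity) hf2.ne', Real.log_mul hch.ne' hf1.ne']
    ring
  have hxl : Real.log (a n : ℝ) = Real.log ((a n : ℝ) / n) + Real.log n := by
    rw [Real.log_div hx0.ne' hN0.ne']; ring
  have hyl : Real.log (w n : ℝ) = Real.log ((w n : ℝ) / n) + Real.log n := by
    rw [Real.log_div hy0.ne' hN0.ne']; ring
  have hzl : Real.log ((a n - w n : ℕ) : ℝ)
      = Real.log (((a n - w n : ℕ) : ℝ) / n) + Real.log n := by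
    rw [Real.log_div hz0.ne' hN0.ne']; ring
  have hz' : ((a n - w n : ℕ) : ℝ) = (a n : ℝ) - (w n : ℝ) := by
    rw [Nat.cast_sub hwan]
  rw [h1]
  simp only [hfdef]
  rw [hxl, hyl, hzl, hz']
  ring


/-- `H(F,G) = F log_q F - G log_q G - (F-G) log_q (F-G)`, the asymptotic exponent
of the binomial coefficient. -/
noncomputable def asympH (q : ℕ) (F G : ℝ) : ℝ :=
  F * Real.logb q F - G * Real.logb q G - (F - G) * Real.logb q (F - G)

/-- Asymptotic exponent of Random Prange: with `v(n) = ⌊t(n)(q-1)/q⌋`,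
`(1/n) log_q [ q^{t(n)} C(n, v(n)) / (C(t(n), v(n)) (q-1)^{v(n)} C(n-k(n), v(n))) ]`
tends to `H(1, V) - H(1-R, V)` where `V = T(q-1)/q`. -/
theorem randomPrange_asymptotics
    (q : ℕ) (hq : 2 ≤ q) (k t : ℕ → ℕ) (hk : ∀ n, k n ≤ n)
    (R T : ℝ) (hR0 : 0 < R) (hR1 : R < 1) (hT : 0 < T)
    (hTR : T * ((q : ℝ) - 1) / q < 1 - R)
    (hkR : Tendsto (fun n => (k n : ℝ) / n) atTop (nhds R))
    (htT : Tendsto (fun n => (t n : ℝ) / n) atTop (nhds T))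
    (v : ℕ → ℕ) (hv : ∀ n, v n = t n * (q - 1) / q) :
    Tendsto (fun n =>
        Real.logb q ((q : ℝ) ^ t n * (Nat.choose n (v n) : ℝ)
          / ((Nat.choose (t n) (v n) : ℝ) * ((q : ℝ) - 1) ^ v n
              * (Nat.choose (n - k n) (v n) : ℝ))) / n)
      atTop
      (nhds (asympH q 1 (T * ((q : ℝ) - 1) / q)
        - asympH q (1 - R) (T * ((q : ℝ) - 1) / q))) := by
  set V : ℝ := T * ((q : ℝ) - 1) / q with hVdef
  have hqR : (0:ℝ) < q := Nat.cast_pos.mpr (by omega)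
  have hq1R : (1:ℝ) < q := by exact_mod_cast hq
  have hqm1 : (0:ℝ) < (q:ℝ) - 1 := by linarith
  have hlogq : 0 < Real.log q := Real.log_pos hq1R
  have hV0 : 0 < V := div_pos (mul_pos hT hqm1) hqR
  have hVT : V < T := by
    rw [hVdef, div_lt_iff₀ hqR]; nlinarith
  have hV1R : V < 1 - R := hTR
  have hR1' : (0:ℝ) < 1 - R := by linarith
  have hV1 : V < 1 := by linarith
  -- cast of t n * (q - 1)
  have hcast_u : ∀ n, ((t n * (q - 1) : ℕ) : ℝ) = (t n : ℝ) * ((q : ℝ) - 1) := by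
    intro n
    rw [Nat.cast_mul, Nat.cast_sub (by omega : 1 ≤ q), Nat.cast_one]
  -- ratio limit for v
  have hupper : Tendsto (fun n => ((t n * (q - 1) : ℕ) : ℝ) / ((q:ℝ) * n)) atTop (nhds V) := by
    have h1 : Tendsto (fun n => (t n : ℝ) / n * (((q:ℝ) - 1) / q)) atTop
        (nhds (T * (((q:ℝ) - 1) / q))) := htT.mul_const _
    rw [← mul_div_assoc] at h1
    refine Tendsto.congr (fun n => ?_) h1
    rw [hcast_u n, div_mul_div_comm, mul_comm ((n:ℝ)) (q:ℝ)]
  have hlow : Tendsto (fun n => ((t n * (q - 1) : ℕ) : ℝ) / ((q:ℝ) * n) - 1 / n) atTop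
      (nhds V) := by
    have := hupper.sub (tendsto_const_div_atTop_nhds_zero_nat 1)
    simpa using this
  have hub : ∀ᶠ n : ℕ in atTop, (v n : ℝ) / n ≤ ((t n * (q - 1) : ℕ) : ℝ) / ((q:ℝ) * n) := by
    filter_upwards [eventually_ge_atTop 1] with n hn
    have hN0 : (0:ℝ) < n := Nat.cast_pos.mpr hn
    have h1 : (v n : ℝ) ≤ ((t n * (q - 1) : ℕ) : ℝ) / (q:ℝ) := by
      rw [hv n]; exact Nat.cast_div_le
    calc (v n : ℝ) / n ≤ (((t n * (q - 1) : ℕ) : ℝ) / (q:ℝ)) / n := by gcongr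
    _ = _ := by rw [div_div, mul_comm ((q:ℝ)) (n:ℝ), mul_comm ((n:ℝ)) (q:ℝ)]
  have hlb : ∀ᶠ n : ℕ in atTop,
      ((t n * (q - 1) : ℕ) : ℝ) / ((q:ℝ) * n) - 1 / n ≤ (v n : ℝ) / n := by
    filter_upwards [eventually_ge_atTop 1] with n hn
    have hN0 : (0:ℝ) < n := Nat.cast_pos.mpr hn
    have hvn := hv n
    set u : ℕ := t n * (q - 1) with hu
    have hdm := Nat.div_add_mod u q
    have hmod : u % q < q := Nat.mod_lt _ (by omega)
    have h1 : (u : ℝ) < (q:ℝ) * (v n : ℝ) + q := by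
      have hcast : (u : ℝ) = (q:ℝ) * ((u / q : ℕ) : ℝ) + ((u % q : ℕ) : ℝ) := by
        exact_mod_cast hdm.symm
      have h2 : ((u % q : ℕ) : ℝ) < (q:ℝ) := by exact_mod_cast hmod
      rw [hvn]
      linarith
    have h3 : (u : ℝ) / (q:ℝ) - 1 ≤ (v n : ℝ) := by
      rw [sub_le_iff_le_add, div_le_iff₀ hqR]
      nlinarith
    have h4 : ((u : ℝ) / (q:ℝ) - 1) / n ≤ (v n : ℝ) / n := by gcongr
    calc (u : ℝ) / ((q:ℝ) * n) - 1 / n = ((u : ℝ) / (q:ℝ) - 1) / n := by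
          rw [sub_div, div_div]
    _ ≤ _ := h4
  have hvV : Tendsto (fun n => (v n : ℝ) / n) atTop (nhds V) :=
    tendsto_of_tendsto_of_tendsto_of_le_of_le' hlow hupper hlb hub
  -- ratio limits for the outer sequences
  have hnn : Tendsto (fun n : ℕ => ((n : ℕ) : ℝ) / n) atTop (nhds 1) := by
    refine Tendsto.congr' ?_ tendsto_const_nhds
    filter_upwards [eventually_ge_atTop 1] with n hn
    have hN0 : ((n:ℝ)) ≠ 0 := (Nat.cast_pos.mpr hn).ne'
    rw [div_self hN0]
  have hnk : Tendsto (fun n => ((n - k n : ℕ) : ℝ) / n) atTop (nhds (1 - R)) := by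
    refine Tendsto.congr (fun n => ?_) (hnn.sub hkR)
    rw [Nat.cast_sub (hk n), sub_div]
  -- eventual inequalities
  have hvt : ∀ n, v n ≤ t n := by
    intro n
    rw [hv n]
    calc t n * (q - 1) / q ≤ t n * q / q := by gcongr; omega
    _ = t n := Nat.mul_div_cancel (t n) (by omega)
  have hvn_le : ∀ᶠ n : ℕ in atTop, v n ≤ n := by
    filter_upwards [hvV.eventually_lt hnn hV1, eventually_ge_atTop 1] with n h1 hn
    have hN0 : (0:ℝ) < n := Nat.cast_pos.mpr hn
    have := (div_lt_div_iff_of_pos_right hN0).mp h1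
    exact_mod_cast this.le
  have hvnk : ∀ᶠ n : ℕ in atTop, v n ≤ n - k n := by
    filter_upwards [hvV.eventually_lt hnk hV1R, eventually_ge_atTop 1] with n h1 hn
    have hN0 : (0:ℝ) < n := Nat.cast_pos.mpr hn
    have := (div_lt_div_iff_of_pos_right hN0).mp h1
    exact_mod_cast this.le
  -- the three binomial limits
  have L1 := tendsto_log_choose (fun n => n) v 1 V hV0 hV1 hvn_le hnn hvV
  have L2 := tendsto_log_choose t v T V hV0 hVT (Eventually.of_forall hvt) htT hvV
  have L3 := tendsto_log_choose (fun n => n - k n) v (1 - R) V hV0 hV1R hvnk hnk hvV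
  -- combine
  have hMain : Tendsto (fun n => ((t n : ℝ) / n * Real.log q
      + Real.log ((Nat.choose n (v n) : ℝ)) / n
      - Real.log ((Nat.choose (t n) (v n) : ℝ)) / n
      - (v n : ℝ) / n * Real.log ((q:ℝ) - 1)
      - Real.log ((Nat.choose (n - k n) (v n) : ℝ)) / n) / Real.log q) atTop
      (nhds ((T * Real.log q
        + (1 * Real.log 1 - V * Real.log V - (1 - V) * Real.log (1 - V))
        - (T * Real.log T - V * Real.log V - (T - V) * Real.log (T - V))
        - V * Real.log ((q:ℝ) - 1)
        - ((1 - R) * Real.log (1 - R) - V * Real.log V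
            - (1 - R - V) * Real.log (1 - R - V))) / Real.log q)) :=
    (((((htT.mul_const _).add L1).sub L2).sub (hvV.mul_const _)).sub L3).div_const _
  have hval : (T * Real.log q
        + (1 * Real.log 1 - V * Real.log V - (1 - V) * Real.log (1 - V))
        - (T * Real.log T - V * Real.log V - (T - V) * Real.log (T - V))
        - V * Real.log ((q:ℝ) - 1)
        - ((1 - R) * Real.log (1 - R) - V * Real.log V
            - (1 - R - V) * Real.log (1 - R - V))) / Real.log q
      = asympH q 1 V - asympH q (1 - R) V := by
    have hlogV : Real.log V = Real.log T + Real.log ((q:ℝ) - 1) - Real.log q := by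
      rw [hVdef, Real.log_div (by positivity) hqR.ne', Real.log_mul hT.ne' hqm1.ne']
    have hTV : T - V = T / q := by
      rw [hVdef]; field_simp; ring
    have hlogTV : Real.log (T - V) = Real.log T - Real.log q := by
      rw [hTV, Real.log_div hT.ne' hqR.ne']
    simp only [asympH, Real.logb]
    rw [hlogTV, hlogV]
    field_simp
    ring
  rw [hval] at hMain
  refine Tendsto.congr' ?_ hMain
  filter_upwards [hvn_le, hvnk, eventually_ge_atTop 1] with n h1 h2 h3
  have hN0 : (0:ℝ) < n := Nat.cast_pos.mpr h3
  have hc1 : (0:ℝ) < (Nat.choose n (v n) : ℝ) := Nat.cast_pos.mpr (Nat.choose_pos h1)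
  have hc2 : (0:ℝ) < (Nat.choose (t n) (v n) : ℝ) := Nat.cast_pos.mpr (Nat.choose_pos (hvt n))
  have hc3 : (0:ℝ) < (Nat.choose (n - k n) (v n) : ℝ) := Nat.cast_pos.mpr (Nat.choose_pos h2)
  have hp1 : (0:ℝ) < (q:ℝ) ^ t n := by positivity
  have hp2 : (0:ℝ) < ((q:ℝ) - 1) ^ v n := by positivity
  rw [Real.logb, Real.log_div (by positivity) (by positivity),
    Real.log_mul hp1.ne' hc1.ne', Real.log_mul (by positivity) hc3.ne',
    Real.log_mul hc2.ne' hp2.ne', Real.log_pow, Real.log_pow]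
  ring
end
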